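/- arXiv:1501.01522 — 5 statements merged into one kernel-verified Lean document; each statement's English description precedes it below -/
import Mathlib

section
/- Let A be a finite set of positive integers with largest element n, and let A' = {0,1,…,n} \ A be its complement in I_n. Then the β-set of the conjugate of λ_A equals n − A' = {n − a' : a' ∈ A'}. -/
/-- A partition: weakly decreasing list of positive integers. -/
def IsPartition (l : List ℕ) : Prop :=
  l.Pairwise (· ≥ ·) ∧ ∀ x ∈ l, 0 < x

/-- The conjugate partition: `λ'ᵢ = #{j : λⱼ ≥ i}` (0-indexed). -/
def conjugatePart (l : List ℕ) : List ℕ :=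
  (List.range (l.headD 0)).map (fun i => (l.filter (fun p => decide (i + 1 ≤ p))).length)

/-- The multiset of hook lengths of the Young diagram of `l` (rows and columns 0-indexed):
`h(i,j) = λᵢ - j + #{i' > i : λᵢ' > j}`. -/
def hooks (l : List ℕ) : Multiset ℕ :=
  ((List.range l.length).flatMap (fun i =>
    (List.range (l.getD i 0)).map (fun j =>
      l.getD i 0 - j + ((l.drop (i + 1)).filter (fun p => decide (j < p))).length)) : List ℕ)

/-- The β-set `{λᵢ + m - i : 1 ≤ i ≤ m}` (here 0-indexed: `λᵢ + (m - 1 - i)`). -/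
def betaSet (l : List ℕ) : Finset ℕ :=
  ((List.range l.length).map (fun i => l.getD i 0 + (l.length - 1 - i))).toFinset

/-- `λ_A`: the partition whose β-set is `A`. -/
def partitionOfBeta (A : Finset ℕ) : List ℕ :=
  ((A.sort (· ≤ ·)).reverse).mapIdx (fun i a => a - (A.card - 1 - i))

/-- A set `S` is `n`-symmetric if `S = {n - x : x ∈ S}`. -/
def NSymm (n : ℕ) (S : Finset ℕ) : Prop :=
  S.image (fun x => n - x) = S

/-- Sum multiset `{x + y : x ∈ M, y ∈ N}` with multiplicity. -/
def msAdd (M N : Multiset ℕ) : Multiset ℕ :=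
  M.bind (fun x => N.map (fun y => x + y))


lemma downward_closed_eq_range (S : Finset ℕ) (h : ∀ k, k + 1 ∈ S → k ∈ S) :
    S = Finset.range S.card := by
  have hdc : ∀ d j, j + d ∈ S → j ∈ S := by
    intro d
    induction d with
    | zero => simpa using fun j h => h
    | succ d ih =>
      intro j hj
      exact h j (ih (j+1) (by simpa [Nat.add_comm, Nat.add_assoc, Nat.add_left_comm] using hj))
  ext k
  simp only [Finset.mem_range]
  constructor
  · intro hk
    have hsub : Finset.range (k+1) ⊆ S := by
      intro j hj
      simp only [Finset.mem_range] at hj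
      have hjk : j + (k - j) = k := by omega
      exact hdc (k - j) j (by rw [hjk]; exact hk)
    have := Finset.card_le_card hsub
    simp only [Finset.card_range] at this; omega
  · intro hk
    by_contra hkS
    have hsub : S ⊆ Finset.range k := by
      intro j hj
      simp only [Finset.mem_range]
      by_contra hjk
      have hkj : k + (j - k) = j := by omega
      exact hkS (hdc (j - k) k (by rw [hkj]; exact hj))
    have := Finset.card_le_card hsub
    simp only [Finset.card_range] at this; omega

lemma length_filter_eq_card (p : ℕ → Bool) (l : List ℕ) :
    (l.filter p).length
      = ((Finset.range l.length).filter (fun j => p (l.getD j 0) = true)).card := by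
  induction l with
  | nil => simp
  | cons a t ih =>
    rw [Finset.card_filter]
    simp only [List.length_cons, Finset.sum_range_succ', List.getD_cons_succ, List.getD_cons_zero,
      List.filter_cons]
    rw [Finset.card_filter] at ih
    by_cases h : p a = true <;> simp [h, ih, Nat.add_comm]

/-- If `A` is a finite set of positive integers with largest element `n` and
`A' = {0,…,n} \ A`, then the β-set of the conjugate of `λ_A` is `n - A'`. -/
theorem stmt_3 (n : ℕ) (A : Finset ℕ) (hpos : ∀ a ∈ A, 0 < a) (hn : n ∈ A)
    (hmax : ∀ a ∈ A, a ≤ n) :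
    betaSet (conjugatePart (partitionOfBeta A)) =
      (Finset.range (n + 1) \ A).image (fun a => n - a) := by
  classical
  set s := A.sort (· ≤ ·) with hs
  set m := A.card with hmdef
  set g : ℕ → ℕ := fun k => s.getD k 0 with hg
  have hslen : s.length = m := Finset.length_sort _
  have hm1 : 1 ≤ m := Finset.card_pos.mpr ⟨n, hn⟩
  have hlt : ∀ i j, i < j → j < m → g i < g j := by
    intro i j hij hj
    have hi' : i < s.length := by omega
    have hj' : j < s.length := by omega
    rw [hg]
    simp only [List.getD_eq_getElem _ _ hi', List.getD_eq_getElem _ _ hj']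
    exact List.pairwise_iff_getElem.mp (Finset.sortedLT_sort A).pairwise i j hi' hj' hij
  have hmemA : ∀ a, a ∈ A ↔ ∃ k, k < m ∧ g k = a := by
    intro a
    have h1 : a ∈ A ↔ a ∈ s := (Finset.mem_sort _).symm
    rw [h1, List.mem_iff_getElem]
    constructor
    · rintro ⟨k, hk, hak⟩
      refine ⟨k, by omega, ?_⟩
      show s.getD k 0 = a
      rw [List.getD_eq_getElem _ _ hk]; exact hak
    · rintro ⟨k, hk, hak⟩
      have hk' : k < s.length := by omega
      refine ⟨k, hk', ?_⟩
      have hak' : s.getD k 0 = a := hak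
      rwa [List.getD_eq_getElem _ _ hk'] at hak'
  have hidx : ∀ k, k < m → k ≤ g k := by
    intro k
    induction k with
    | zero => omega
    | succ k ih =>
      intro hk
      have := hlt k (k+1) (by omega) hk
      have := ih (by omega)
      omega
  have smax : g (m - 1) = n := by
    obtain ⟨k, hk, hgk⟩ := (hmemA n).mp hn
    have h1 : g (m-1) ≤ n := hmax _ ((hmemA _).mpr ⟨m-1, by omega, rfl⟩)
    rcases Nat.lt_or_ge k (m-1) with h | h
    · have := hlt k (m-1) h (by omega); omega
    · have hke : k = m - 1 := by omega
      rw [← hke]; omega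
  have hmn : m - 1 ≤ n := by have := hidx (m-1) (by omega); omega
  have hllen : (partitionOfBeta A).length = m := by
    unfold partitionOfBeta
    rw [List.length_mapIdx, List.length_reverse, ← hs, hslen]
  have lget : ∀ j, j < m → (partitionOfBeta A).getD j 0 = g (m-1-j) - (m-1-j) := by
    intro j hj
    rw [List.getD_eq_getElem _ _ (by omega)]
    unfold partitionOfBeta
    simp only [List.getElem_mapIdx, List.getElem_reverse, List.length_reverse, ← hs, hslen,
      ← hmdef, hg]
    rw [List.getD_eq_getElem _ _ (by omega)]
  set t : ℕ → ℕ := fun i => ((Finset.range m).filter (fun k => g k ≤ i + k)).card with htdef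
  set c : ℕ → ℕ := fun i => ((Finset.range m).filter (fun k => ¬ (g k ≤ i + k))).card with hcdef
  have hct : ∀ i, t i + c i = m := by
    intro i
    have h := Finset.card_filter_add_card_filter_not
      (s := Finset.range m) (p := fun k => g k ≤ i + k)
    rw [Finset.card_range] at h
    exact h
  have htle : ∀ i, t i ≤ m := by
    intro i
    have := Finset.card_filter_le (Finset.range m) (fun k => g k ≤ i + k)
    rw [Finset.card_range] at this
    exact this
  have hfl : ∀ i, ((partitionOfBeta A).filter (fun p => decide (i+1 ≤ p))).length = c i := by
    intro i
    rw [length_filter_eq_card, hllen, hcdef]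
    apply Finset.card_bij' (i := fun j _ => m-1-j) (j := fun k _ => m-1-k)
    · intro j hj
      simp only [Finset.mem_filter, Finset.mem_range, decide_eq_true_iff] at hj ⊢
      obtain ⟨hj1, hj2⟩ := hj
      rw [lget j hj1] at hj2
      exact ⟨by omega, by omega⟩
    · intro k hk
      simp only [Finset.mem_filter, Finset.mem_range, decide_eq_true_iff] at hk ⊢
      obtain ⟨hk1, hk2⟩ := hk
      refine ⟨by omega, ?_⟩
      rw [lget (m-1-k) (by omega)]
      have he : m - 1 - (m-1-k) = k := by omega
      rw [he]
      omega
    · intro j hj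
      simp only [Finset.mem_filter, Finset.mem_range] at hj
      omega
    · intro k hk
      simp only [Finset.mem_filter, Finset.mem_range] at hk
      omega
  have hrange : ∀ i, (Finset.range m).filter (fun k => g k ≤ i + k) = Finset.range (t i) := by
    intro i
    rw [htdef]
    apply downward_closed_eq_range
    intro k hk
    simp only [Finset.mem_filter, Finset.mem_range] at hk ⊢
    obtain ⟨hk1, hk2⟩ := hk
    have := hlt k (k+1) (by omega) hk1
    exact ⟨by omega, by omega⟩
  have hnotmem : ∀ i, t i + i ∉ A := by
    intro i hmem
    obtain ⟨k, hk, hgk⟩ := (hmemA _).mp hmem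
    rcases Nat.lt_or_ge k (t i) with h | h
    · have hin : k ∈ Finset.range (t i) := Finset.mem_range.mpr h
      rw [← hrange i] at hin
      simp only [Finset.mem_filter] at hin
      omega
    · have hnin : k ∉ Finset.range (t i) := by simp only [Finset.mem_range]; omega
      rw [← hrange i] at hnin
      simp only [Finset.mem_filter, Finset.mem_range, not_and, not_le] at hnin
      have := hnin hk
      omega
  have htmono : ∀ i j, i ≤ j → t i ≤ t j := by
    intro i j hij
    rw [htdef]
    apply Finset.card_le_card
    intro k hk
    simp only [Finset.mem_filter, Finset.mem_range] at hk ⊢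
    exact ⟨hk.1, by omega⟩
  have hhead : (partitionOfBeta A).headD 0 = n - (m-1) := by
    have h0 : (partitionOfBeta A).headD 0 = (partitionOfBeta A).getD 0 0 := by
      cases hp : partitionOfBeta A <;> simp
    rw [h0, lget 0 (by omega)]
    simp only [Nat.sub_zero]
    rw [smax]
  set L := n - (m-1) with hLdef
  have hLn : m - 1 + L = n := by omega
  have hcl : conjugatePart (partitionOfBeta A) = (List.range L).map c := by
    unfold conjugatePart
    rw [hhead]
    exact List.map_congr_left (fun i _ => hfl i)
  have hbeta : betaSet (conjugatePart (partitionOfBeta A))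
      = (Finset.range L).image (fun i => c i + (L - 1 - i)) := by
    rw [hcl]
    unfold betaSet
    ext x
    simp only [List.mem_toFinset, List.mem_map, List.mem_range, Finset.mem_image,
      Finset.mem_range, List.length_map, List.length_range]
    constructor
    · rintro ⟨i, hi, hx⟩
      refine ⟨i, hi, ?_⟩
      rw [← hx]
      congr 1
      rw [List.getD_eq_getElem _ _ (by simp only [List.length_map, List.length_range]; omega)]
      simp
    · rintro ⟨i, hi, hx⟩
      refine ⟨i, hi, ?_⟩
      rw [← hx]
      congr 1
      rw [List.getD_eq_getElem _ _ (by simp only [List.length_map, List.length_range]; omega)]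
      simp
  rw [hbeta]
  apply Finset.eq_of_subset_of_card_le
  · intro x hx
    simp only [Finset.mem_image, Finset.mem_range] at hx
    obtain ⟨i, hi, hx⟩ := hx
    simp only [Finset.mem_image, Finset.mem_sdiff, Finset.mem_range]
    have hcti := hct i
    have htlei := htle i
    refine ⟨t i + i, ⟨by omega, hnotmem i⟩, by omega⟩
  · have hcardL : ((Finset.range L).image (fun i => c i + (L-1-i))).card = L := by
      rw [Finset.card_image_of_injOn, Finset.card_range]
      intro i hi j hj hf
      simp only [Finset.coe_range, Set.mem_Iio] at hi hj
      have hf' : c i + (L - 1 - i) = c j + (L - 1 - j) := hf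
      by_contra hne
      rcases Nat.lt_or_ge i j with h | h
      · have h1 := htmono i j (le_of_lt h)
        have h2 := hct i; have h3 := hct j
        omega
      · have h' : j < i := by omega
        have h1 := htmono j i (le_of_lt h')
        have h2 := hct i; have h3 := hct j
        omega
    have hsub : A ⊆ Finset.range (n+1) := fun a ha =>
      Finset.mem_range.mpr (by have := hmax a ha; omega)
    have hcardR : ((Finset.range (n+1) \ A).image (fun a => n - a)).card = L := by
      rw [Finset.card_image_of_injOn]
      · rw [Finset.card_sdiff_of_subset hsub, Finset.card_range, ← hmdef]
        omega
      · intro a ha b hb hab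
        simp only [Finset.coe_sdiff, Set.mem_diff, Finset.coe_range, Set.mem_Iio] at ha hb
        have hab' : n - a = n - b := hab
        have ha' : a < n + 1 := ha.1
        have hb' : b < n + 1 := hb.1
        omega
    rw [hcardL, hcardR]
end

section
/- Let A, B ⊆ {1,…,n} be distinct sets with n ∈ A ∩ B and H(λ_A) = H(λ_B). Then λ_A and λ_B are conjugate to each other if and only if A \ B and B \ A are both n-symmetric sets. -/
/-! ### Descending enumeration of a finset -/

/-- The descending sorted list of `A`. -/
def rList (A : Finset ℕ) : List ℕ := (A.sort (· ≤ ·)).reverse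

/-- The `i`-th largest element of `A` (0-indexed). -/
def aE (A : Finset ℕ) (i : ℕ) : ℕ := (rList A).getD i 0

lemma rList_length (A : Finset ℕ) : (rList A).length = A.card := by
  simp [rList]

lemma rList_mem (A : Finset ℕ) (x : ℕ) : x ∈ rList A ↔ x ∈ A := by
  simp [rList]

lemma rList_sorted (A : Finset ℕ) : List.Pairwise (· > ·) (rList A) := by
  exact List.pairwise_reverse.mpr (A.sortedLT_sort.pairwise)

lemma aE_mem (A : Finset ℕ) {i : ℕ} (hi : i < A.card) : aE A i ∈ A := by
  rw [← rList_mem]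
  rw [aE, List.getD_eq_getElem _ _ (by rw [rList_length]; exact hi)]
  exact List.getElem_mem _

lemma aE_strict (A : Finset ℕ) {i j : ℕ} (hij : i < j) (hj : j < A.card) :
    aE A j < aE A i := by
  have hi : i < (rList A).length := by rw [rList_length]; omega
  have hj' : j < (rList A).length := by rw [rList_length]; exact hj
  rw [aE, aE, List.getD_eq_getElem _ _ hi, List.getD_eq_getElem _ _ hj']
  exact (List.pairwise_iff_getElem.mp (rList_sorted A)) i j hi hj' hij

lemma aE_gap' (A : Finset ℕ) (d : ℕ) : ∀ i, i + d < A.card → aE A (i + d) + d ≤ aE A i := by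
  induction d with
  | zero => intro i _; simp
  | succ k ih =>
    intro i hi
    have h1 : aE A (i + (k+1)) < aE A (i + k) := aE_strict A (by omega) (by omega)
    have h2 := ih i (by omega)
    omega

lemma aE_gap (A : Finset ℕ) {i j : ℕ} (hij : i ≤ j) (hj : j < A.card) :
    aE A j + (j - i) ≤ aE A i := by
  have := aE_gap' A (j - i) i (by omega)
  have : i + (j - i) = j := by omega
  have := aE_gap' A (j - i) i (by omega)
  rw [show i + (j - i) = j by omega] at this
  exact this

lemma aE_ge (A : Finset ℕ) {i : ℕ} (hi : i < A.card) : A.card - 1 - i ≤ aE A i := by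
  have := aE_gap A (i := i) (j := A.card - 1) (by omega) (by omega)
  omega

lemma aE_surj (A : Finset ℕ) {x : ℕ} (hx : x ∈ A) : ∃ i < A.card, aE A i = x := by
  have : x ∈ rList A := (rList_mem A x).mpr hx
  obtain ⟨i, hi, h⟩ := List.mem_iff_getElem.mp this
  exact ⟨i, by rwa [rList_length] at hi, by rw [aE, List.getD_eq_getElem _ _ hi, h]⟩

/-! ### Basic facts about `partitionOfBeta` -/

lemma pOB_length (A : Finset ℕ) : (partitionOfBeta A).length = A.card := by
  simp [partitionOfBeta]

lemma pOB_getD (A : Finset ℕ) {i : ℕ} (hi : i < A.card) :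
    (partitionOfBeta A).getD i 0 = aE A i - (A.card - 1 - i) := by
  have hi' : i < (partitionOfBeta A).length := by rw [pOB_length]; exact hi
  rw [List.getD_eq_getElem _ _ hi']
  simp only [partitionOfBeta, List.getElem_mapIdx]
  congr 1
  rw [aE, List.getD_eq_getElem _ _ (by rw [rList_length]; exact hi)]
  rfl

lemma pOB_getD_add (A : Finset ℕ) {i : ℕ} (hi : i < A.card) :
    (partitionOfBeta A).getD i 0 + (A.card - 1 - i) = aE A i := by
  rw [pOB_getD A hi]
  have := aE_ge A hi
  omega

/-! ### Counting entries of lists via Finset cards -/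

lemma filter_length_sum (u : List ℕ) (p : ℕ → Bool) :
    (u.filter p).length = ∑ k ∈ Finset.range u.length, if p (u.getD k 0) then 1 else 0 := by
  induction u with
  | nil => simp
  | cons a u ih =>
    rw [List.filter_cons, List.length_cons, Finset.sum_range_succ']
    simp only [List.getD_cons_succ, List.getD_cons_zero]
    by_cases h : p a <;> simp [h, ih]

lemma filter_length_card (u : List ℕ) (p : ℕ → Bool) :
    (u.filter p).length = ((Finset.range u.length).filter (fun k => p (u.getD k 0))).card := by
  rw [filter_length_sum, Finset.card_filter]

lemma getD_drop (l : List ℕ) (d k : ℕ) (h : d + k < l.length) :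
    (l.drop d).getD k 0 = l.getD (d + k) 0 := by
  rw [List.getD_eq_getElem _ _ (by rw [List.length_drop]; omega),
      List.getD_eq_getElem _ _ h]
  exact List.getElem_drop

lemma drop_filter_card (l : List ℕ) (d : ℕ) (p : ℕ → Bool) :
    ((l.drop d).filter p).length
      = ((Finset.Ico d l.length).filter (fun k => p (l.getD k 0))).card := by
  rw [filter_length_card, List.length_drop]
  apply Finset.card_bij' (fun k _ => d + k) (fun k _ => k - d)
  · intro k hk
    simp only [Finset.mem_filter, Finset.mem_range] at hk
    simp only [Finset.mem_filter, Finset.mem_Ico]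
    rw [getD_drop l d k (by omega)] at hk
    exact ⟨⟨by omega, by omega⟩, hk.2⟩
  · intro k hk
    simp only [Finset.mem_filter, Finset.mem_Ico] at hk
    simp only [Finset.mem_filter, Finset.mem_range]
    rw [getD_drop l d (k - d) (by omega)]
    constructor
    · omega
    · rw [show d + (k - d) = k by omega]; exact hk.2
  · intro k hk; simp only [Finset.mem_filter, Finset.mem_range] at hk; omega
  · intro k hk; simp only [Finset.mem_filter, Finset.mem_Ico] at hk; omega

/-! ### The complement-enumeration function `bfun` -/

/-- number of rows `k ∈ [t, m)` with `λₖ ≤ j`. -/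
def cntLe (A : Finset ℕ) (t j : ℕ) : ℕ :=
  ((Finset.Ico t A.card).filter (fun k => (partitionOfBeta A).getD k 0 ≤ j)).card

/-- the enumeration function of the complement of the β-set. -/
def bfun (A : Finset ℕ) (t j : ℕ) : ℕ := j + cntLe A t j

lemma cntLe_le (A : Finset ℕ) (t j : ℕ) : cntLe A t j ≤ A.card - t := by
  have := Finset.card_le_card (Finset.filter_subset
    (fun k => (partitionOfBeta A).getD k 0 ≤ j) (Finset.Ico t A.card))
  rwa [Nat.card_Ico] at this

lemma cntLe_mono (A : Finset ℕ) (t : ℕ) {j j' : ℕ} (h : j ≤ j') :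
    cntLe A t j ≤ cntLe A t j' := by
  apply Finset.card_le_card
  intro k hk
  simp only [Finset.mem_filter] at hk ⊢
  exact ⟨hk.1, by omega⟩

lemma bfun_strictMono (A : Finset ℕ) (t : ℕ) {j j' : ℕ} (h : j < j') :
    bfun A t j < bfun A t j' := by
  have := cntLe_mono A t (le_of_lt h)
  unfold bfun; omega

lemma pOB_mono (A : Finset ℕ) {k k' : ℕ} (h : k ≤ k') (h' : k' < A.card) :
    (partitionOfBeta A).getD k' 0 ≤ (partitionOfBeta A).getD k 0 := by
  rw [pOB_getD A (i := k') h', pOB_getD A (i := k) (by omega)]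
  have h1 := aE_gap A h h'
  have h2 := aE_ge A (show k < A.card by omega)
  have h3 := aE_ge A h'
  omega

lemma bfun_ne (A : Finset ℕ) {t k : ℕ} (htk : t ≤ k) (hk : k < A.card) (j : ℕ) :
    bfun A t j ≠ aE A k := by
  have hak : (partitionOfBeta A).getD k 0 + (A.card - 1 - k) = aE A k := pOB_getD_add A hk
  by_cases hcase : (partitionOfBeta A).getD k 0 ≤ j
  · -- `cntLe ≥ m - k`
    have hsub : Finset.Ico k A.card ⊆ (Finset.Ico t A.card).filter (fun k' => (partitionOfBeta A).getD k' 0 ≤ j) := by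
      intro k' hk'
      simp only [Finset.mem_Ico] at hk'
      simp only [Finset.mem_filter, Finset.mem_Ico]
      refine ⟨⟨by omega, hk'.2⟩, le_trans (pOB_mono A hk'.1 hk'.2) hcase⟩
    have hcard := Finset.card_le_card hsub
    rw [Nat.card_Ico] at hcard
    have : A.card - k ≤ cntLe A t j := hcard
    unfold bfun; omega
  · -- `cntLe ≤ m - 1 - k`
    push_neg at hcase
    have hsub : (Finset.Ico t A.card).filter (fun k' => (partitionOfBeta A).getD k' 0 ≤ j) ⊆ Finset.Ico (k+1) A.card := by
      intro k' hk'
      simp only [Finset.mem_filter, Finset.mem_Ico] at hk'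
      simp only [Finset.mem_Ico]
      refine ⟨?_, hk'.1.2⟩
      by_contra hle
      push_neg at hle
      have := pOB_mono A (show k' ≤ k by omega) hk
      omega
    have hcard := Finset.card_le_card hsub
    rw [Nat.card_Ico] at hcard
    have : cntLe A t j ≤ A.card - (k+1) := hcard
    unfold bfun; omega

lemma bfun_lt (A : Finset ℕ) {i j : ℕ} (hi : i < A.card)
    (hj : j < (partitionOfBeta A).getD i 0) : bfun A (i+1) j < aE A i := by
  have h1 := cntLe_le A (i+1) j
  have h2 := pOB_getD_add A hi
  unfold bfun
  omega

lemma bfun_notMem_of_lt (A : Finset ℕ) {t j : ℕ} (hb : ∀ k < t, bfun A t j < aE A k) :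
    bfun A t j ∉ A := by
  intro hmem
  obtain ⟨k, hk, hke⟩ := aE_surj A hmem
  by_cases hkt : k < t
  · have := hb k hkt; omega
  · exact bfun_ne A (by omega) hk j hke.symm

lemma bfun_row_notMem (A : Finset ℕ) {i j : ℕ} (hi : i < A.card)
    (hj : j < (partitionOfBeta A).getD i 0) : bfun A (i+1) j ∉ A := by
  apply bfun_notMem_of_lt
  intro k hk
  calc bfun A (i+1) j < aE A i := bfun_lt A hi hj
    _ ≤ aE A k := by have := aE_gap A (show k ≤ i by omega) hi; omega

lemma bfun_glob_notMem (A : Finset ℕ) (j : ℕ) : bfun A 0 j ∉ A :=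
  bfun_notMem_of_lt A (fun k hk => by omega)

/-! ### Image lemmas: `bfun` enumerates the complement of the β-set -/

lemma filter_lt_eq_image (A : Finset ℕ) {i : ℕ} (hi : i < A.card) :
    A.filter (· < aE A i) = (Finset.Ico (i+1) A.card).image (aE A) := by
  ext x
  simp only [Finset.mem_filter, Finset.mem_image, Finset.mem_Ico]
  constructor
  · rintro ⟨hxA, hxlt⟩
    obtain ⟨k, hk, hke⟩ := aE_surj A hxA
    refine ⟨k, ⟨?_, hk⟩, hke⟩
    by_contra hle
    push_neg at hle
    have := aE_gap A (show k ≤ i by omega) hi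
    omega
  · rintro ⟨k, ⟨hk1, hk2⟩, hke⟩
    subst hke
    exact ⟨aE_mem A hk2, aE_strict A (by omega) hk2⟩

lemma card_filter_lt (A : Finset ℕ) {i : ℕ} (hi : i < A.card) :
    (A.filter (· < aE A i)).card = A.card - 1 - i := by
  rw [filter_lt_eq_image A hi]
  rw [Finset.card_image_of_injOn]
  · rw [Nat.card_Ico]; omega
  · intro x hx y hy hxy
    simp only [Finset.mem_coe, Finset.mem_Ico] at hx hy
    by_contra hne
    rcases Nat.lt_or_ge x y with h | h
    · have := aE_strict A h hy.2; omega
    · have := aE_strict A (show y < x by omega) hx.2; omega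

lemma range_filter_mem_eq (A : Finset ℕ) (a : ℕ) :
    (Finset.range a).filter (· ∈ A) = A.filter (· < a) := by
  ext x; simp only [Finset.mem_filter, Finset.mem_range]; tauto

lemma card_range_filter_notMem (A : Finset ℕ) {i : ℕ} (hi : i < A.card) :
    ((Finset.range (aE A i)).filter (· ∉ A)).card = (partitionOfBeta A).getD i 0 := by
  have hsplit := Finset.card_filter_add_card_filter_not
    (s := Finset.range (aE A i)) (· ∈ A)
  rw [Finset.card_range, range_filter_mem_eq, card_filter_lt A hi] at hsplit
  have h2 := pOB_getD_add A hi
  omega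

lemma image_row (A : Finset ℕ) {i : ℕ} (hi : i < A.card) :
    (Finset.range ((partitionOfBeta A).getD i 0)).image (bfun A (i+1))
      = (Finset.range (aE A i)).filter (· ∉ A) := by
  apply Finset.eq_of_subset_of_card_le
  · intro x hx
    simp only [Finset.mem_image, Finset.mem_range] at hx
    obtain ⟨j, hj, hje⟩ := hx
    subst hje
    simp only [Finset.mem_filter, Finset.mem_range]
    exact ⟨bfun_lt A hi hj, bfun_row_notMem A hi hj⟩
  · rw [card_range_filter_notMem A hi]
    rw [Finset.card_image_of_injOn]
    · rw [Finset.card_range]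
    · intro x hx y hy hxy
      by_contra hne
      rcases Nat.lt_or_ge x y with h | h
      · have := bfun_strictMono A (i+1) h; omega
      · have : y < x := by omega
        have := bfun_strictMono A (i+1) this; omega

lemma bfun_inj (A : Finset ℕ) (t : ℕ) : Function.Injective (bfun A t) := by
  intro x y hxy
  by_contra hne
  rcases Nat.lt_or_ge x y with h | h
  · have := bfun_strictMono A t h; omega
  · have : y < x := by omega
    have := bfun_strictMono A t this; omega

/-! ### Global (conjugate) versions, assuming `A ⊆ [1, n]`, `n ∈ A` -/

section Global
variable {n : ℕ} {A : Finset ℕ} (hA : A ⊆ Finset.Icc 1 n) (hnA : n ∈ A)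

include hA hnA

lemma card_le_n : A.card ≤ n := by
  have := Finset.card_le_card hA
  rwa [Nat.card_Icc, Nat.add_sub_cancel] at this

lemma aE_zero : aE A 0 = n := by
  have hpos : 0 < A.card := Finset.card_pos.mpr ⟨n, hnA⟩
  have h1 : aE A 0 ∈ A := aE_mem A hpos
  have h2 := (Finset.mem_Icc.mp (hA h1)).2
  obtain ⟨k, hk, hke⟩ := aE_surj A hnA
  have := aE_gap A (show 0 ≤ k by omega) hk
  omega

lemma card_range_filter_notMem_glob :
    ((Finset.range (n+1)).filter (· ∉ A)).card = n + 1 - A.card := by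
  have hsplit := Finset.card_filter_add_card_filter_not
    (s := Finset.range (n+1)) (· ∈ A)
  rw [Finset.card_range, range_filter_mem_eq] at hsplit
  have : A.filter (· < n + 1) = A := by
    apply Finset.filter_true_of_mem
    intro x hx
    have := (Finset.mem_Icc.mp (hA hx)).2
    omega
  rw [this] at hsplit
  omega

lemma bfun_glob_le {j : ℕ} (hj : j < n + 1 - A.card) : bfun A 0 j ≤ n := by
  have h1 := cntLe_le A 0 j
  have h2 := card_le_n hA hnA
  unfold bfun
  omega

lemma image_glob :
    (Finset.range (n + 1 - A.card)).image (bfun A 0)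
      = (Finset.range (n+1)).filter (· ∉ A) := by
  apply Finset.eq_of_subset_of_card_le
  · intro x hx
    simp only [Finset.mem_image, Finset.mem_range] at hx
    obtain ⟨j, hj, hje⟩ := hx
    subst hje
    simp only [Finset.mem_filter, Finset.mem_range]
    exact ⟨by have := bfun_glob_le hA hnA hj; omega, bfun_glob_notMem A j⟩
  · rw [card_range_filter_notMem_glob hA hnA]
    rw [Finset.card_image_of_injective _ (bfun_inj A 0), Finset.card_range]

end Global

/-! ### The hook polynomial -/

open LaurentPolynomial in
/-- The generating polynomial of a multiset of naturals, in `ℤ[T;T⁻¹]`. -/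
noncomputable def hpol (M : Multiset ℕ) : LaurentPolynomial ℤ :=
  (M.map (fun h : ℕ => T (h : ℤ))).sum

lemma list_range_map_sum {M : Type*} [AddCommMonoid M] (N : ℕ) (F : ℕ → M) :
    ((List.range N).map F).sum = ∑ i ∈ Finset.range N, F i := by
  induction N with
  | zero => simp
  | succ k ih =>
    rw [List.range_succ, Finset.sum_range_succ, List.map_append, List.sum_append, ih]
    simp

lemma list_flatMap_sum {α : Type*} {M : Type*} [AddCommMonoid M]
    (u : List α) (g : α → List M) :
    (u.flatMap g).sum = (u.map (fun a => (g a).sum)).sum := by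
  induction u with
  | nil => simp
  | cons a u ih => simp [List.flatMap_cons, ih]

/-- the number of rows `k ∈ (i, m)` with `λₖ > j` -/
lemma cntGt_eq (A : Finset ℕ) (i j : ℕ) :
    (((partitionOfBeta A).drop (i + 1)).filter (fun p => decide (j < p))).length
      = (A.card - (i+1)) - cntLe A (i+1) j := by
  rw [drop_filter_card, pOB_length]
  have hsplit := Finset.card_filter_add_card_filter_not
    (s := Finset.Ico (i+1) A.card) (fun k => (partitionOfBeta A).getD k 0 ≤ j)
  rw [Nat.card_Ico] at hsplit
  have hcongr : (Finset.Ico (i+1) A.card).filter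
      (fun k => ¬ (partitionOfBeta A).getD k 0 ≤ j)
      = (Finset.Ico (i+1) A.card).filter
        (fun k => decide (j < (partitionOfBeta A).getD k 0) = true) := by
    apply Finset.filter_congr
    intro k _
    simp only [decide_eq_true_eq]
    omega
  rw [hcongr] at hsplit
  have : cntLe A (i+1) j = ((Finset.Ico (i+1) A.card).filter
      (fun k => (partitionOfBeta A).getD k 0 ≤ j)).card := rfl
  omega

open LaurentPolynomial in
lemma hpol_hooks (A : Finset ℕ) :
    hpol (hooks (partitionOfBeta A))
      = ∑ a ∈ A, ∑ b ∈ (Finset.range a).filter (· ∉ A), T ((a:ℤ) - b) := by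
  unfold hooks hpol
  rw [Multiset.map_coe, Multiset.sum_coe, List.map_flatMap, list_flatMap_sum,
    list_range_map_sum, pOB_length]
  have hrow : ∀ i ∈ Finset.range A.card,
      ((List.map (fun h : ℕ => T (R := ℤ) (h:ℤ))
        ((List.range ((partitionOfBeta A).getD i 0)).map (fun j =>
          (partitionOfBeta A).getD i 0 - j +
            (((partitionOfBeta A).drop (i + 1)).filter (fun p => decide (j < p))).length))).sum)
      = ∑ b ∈ (Finset.range (aE A i)).filter (· ∉ A), T ((aE A i : ℤ) - b) := by
    intro i hi
    rw [Finset.mem_range] at hi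
    rw [List.map_map, list_range_map_sum]
    rw [← image_row A hi, Finset.sum_image (by
      intro x _ y _ hxy
      exact bfun_inj A (i+1) hxy)]
    apply Finset.sum_congr rfl
    intro j hj
    rw [Finset.mem_range] at hj
    simp only [Function.comp_apply]
    congr 1
    -- hook length = aE A i - bfun A (i+1) j
    have h1 : (partitionOfBeta A).getD i 0 - j +
        (((partitionOfBeta A).drop (i + 1)).filter (fun p => decide (j < p))).length
        + bfun A (i+1) j = aE A i := by
      rw [cntGt_eq A i j]
      have h2 := pOB_getD_add A hi
      have h3 := cntLe_le A (i+1) j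
      unfold bfun
      omega
    have h4 : bfun A (i+1) j ≤ aE A i := by omega
    push_cast [← h1]
    ring
  rw [Finset.sum_congr rfl hrow]
  apply Finset.sum_bij (fun i hi => aE A i)
  · intro i hi
    exact aE_mem A (Finset.mem_range.mp hi)
  · intro i hi i' hi' hii
    rw [Finset.mem_range] at hi hi'
    by_contra hne
    rcases Nat.lt_or_ge i i' with h | h
    · have := aE_strict A h hi'; omega
    · have := aE_strict A (show i' < i by omega) hi; omega
  · intro a ha
    obtain ⟨k, hk, hke⟩ := aE_surj A ha
    exact ⟨k, Finset.mem_range.mpr hk, hke⟩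
  · intro i hi; rfl

/-! ### The conjugate partition via the reflected complement β-set -/

/-- The β-set of the conjugate partition. -/
def Astar (n : ℕ) (A : Finset ℕ) : Finset ℕ :=
  (Finset.range (n+1)).filter (fun x => n - x ∉ A)

section Conj
variable {n : ℕ} {A : Finset ℕ} (hA : A ⊆ Finset.Icc 1 n) (hnA : n ∈ A)

include hA hnA

lemma mem_of_mem_A {x : ℕ} (hx : x ∈ A) : 1 ≤ x ∧ x ≤ n := by
  have := Finset.mem_Icc.mp (hA hx); omega

omit hnA in
lemma Astar_eq_image :
    Astar n A = ((Finset.range (n+1)).filter (· ∉ A)).image (fun b => n - b) := by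
  ext x
  simp only [Astar, Finset.mem_filter, Finset.mem_image, Finset.mem_range]
  constructor
  · rintro ⟨hx, hnx⟩
    exact ⟨n - x, ⟨by omega, hnx⟩, by omega⟩
  · rintro ⟨b, ⟨hb, hbA⟩, hbe⟩
    subst hbe
    constructor
    · omega
    · rw [show n - (n - b) = b by omega]
      exact hbA

lemma Astar_card : (Astar n A).card = n + 1 - A.card := by
  rw [Astar_eq_image hA, Finset.card_image_of_injOn, card_range_filter_notMem_glob hA hnA]
  intro x hx y hy hxy
  simp only [Finset.coe_filter, Set.mem_setOf_eq, Finset.mem_range] at hx hy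
  have : n - x = n - y := hxy
  omega

/-- the descending enumeration list of `Astar n A` -/
lemma rList_Astar :
    rList (Astar n A) = (List.range (n + 1 - A.card)).map (fun i => n - bfun A 0 i) := by
  have hwsorted : List.Pairwise (· > ·) ((List.range (n + 1 - A.card)).map
      (fun i => n - bfun A 0 i)) := by
    rw [List.pairwise_iff_getElem]
    intro i j hi hj hij
    have hi' : i < n + 1 - A.card := by simpa using hi
    have hj' : j < n + 1 - A.card := by simpa using hj
    simp only [List.getElem_map, List.getElem_range]
    have hbi := bfun_glob_le hA hnA hi'
    have hbj := bfun_glob_le hA hnA hj'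
    have := bfun_strictMono A 0 hij
    omega
  have : IsIrrefl ℕ (· > ·) := ⟨fun a => by omega⟩
  have hwnodup : ((List.range (n + 1 - A.card)).map (fun i => n - bfun A 0 i)).Nodup :=
    hwsorted.nodup
  have htf : ((List.range (n + 1 - A.card)).map (fun i => n - bfun A 0 i)).toFinset
      = Astar n A := by
    rw [Astar_eq_image hA, ← image_glob hA hnA]
    ext x
    simp only [List.mem_toFinset, List.mem_map, List.mem_range, Finset.mem_image,
      Finset.mem_range]
    constructor
    · rintro ⟨i, hi, hie⟩
      exact ⟨bfun A 0 i, ⟨i, hi, rfl⟩, hie⟩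
    · rintro ⟨b, ⟨i, hi, hie⟩, hbe⟩
      exact ⟨i, hi, by rw [← hie] at hbe; exact hbe⟩
  have hrnodup : (rList (Astar n A)).Nodup := by
    unfold rList
    rw [List.nodup_reverse]
    exact (Astar n A).sort_nodup _
  have hrtf : (rList (Astar n A)).toFinset = Astar n A := by
    ext x
    rw [List.mem_toFinset, rList_mem]
  have hperm := List.perm_of_nodup_nodup_toFinset_eq hrnodup hwnodup (by rw [htf, hrtf])
  have : IsAntisymm ℕ (· > ·) := ⟨fun a b h1 h2 => by omega⟩
  exact List.Perm.eq_of_pairwise' (rList_sorted _) hwsorted hperm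

lemma aE_Astar {i : ℕ} (hi : i < n + 1 - A.card) :
    aE (Astar n A) i = n - bfun A 0 i := by
  rw [aE, rList_Astar hA hnA]
  rw [List.getD_eq_getElem _ _ (by simp only [List.length_map, List.length_range]; omega)]
  simp

lemma headD_pOB : (partitionOfBeta A).headD 0 = n + 1 - A.card := by
  have hpos : 0 < A.card := Finset.card_pos.mpr ⟨n, hnA⟩
  have hlen : 0 < (partitionOfBeta A).length := by rw [pOB_length]; exact hpos
  have : (partitionOfBeta A).headD 0 = (partitionOfBeta A).getD 0 0 := by
    cases h : partitionOfBeta A with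
    | nil => rfl
    | cons a u => rfl
  rw [this, pOB_getD A hpos]
  rw [aE_zero hA hnA]
  have := card_le_n hA hnA
  omega

lemma conj_pOB : conjugatePart (partitionOfBeta A) = partitionOfBeta (Astar n A) := by
  have hm : 0 < A.card := Finset.card_pos.mpr ⟨n, hnA⟩
  have hmn := card_le_n hA hnA
  have hcard := Astar_card hA hnA
  -- lengths
  have hlen1 : (conjugatePart (partitionOfBeta A)).length = n + 1 - A.card := by
    unfold conjugatePart
    rw [List.length_map, List.length_range, headD_pOB hA hnA]
  have hlen2 : (partitionOfBeta (Astar n A)).length = n + 1 - A.card := by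
    rw [pOB_length, hcard]
  apply List.ext_getElem (by omega)
  intro i hi1 hi2
  have hiL : i < n + 1 - A.card := by omega
  -- LHS entry
  have hLHS : (conjugatePart (partitionOfBeta A))[i] = A.card - cntLe A 0 i := by
    simp only [conjugatePart, List.getElem_map, List.getElem_range]
    rw [filter_length_card, pOB_length]
    have hsplit := Finset.card_filter_add_card_filter_not
      (s := Finset.range A.card) (fun k => (partitionOfBeta A).getD k 0 ≤ i)
    rw [Finset.card_range] at hsplit
    have hcongr : (Finset.range A.card).filter
        (fun k => ¬ (partitionOfBeta A).getD k 0 ≤ i)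
        = (Finset.range A.card).filter
          (fun k => (decide (i + 1 ≤ (partitionOfBeta A).getD k 0)) = true) := by
      apply Finset.filter_congr
      intro k _
      simp only [decide_eq_true_eq]
      omega
    rw [hcongr] at hsplit
    have hc : cntLe A 0 i = ((Finset.range A.card).filter
        (fun k => (partitionOfBeta A).getD k 0 ≤ i)).card := by
      rw [cntLe, ← Finset.range_eq_Ico]
    omega
  -- RHS entry
  have hRHS : (partitionOfBeta (Astar n A))[i] = A.card - cntLe A 0 i := by
    have : (partitionOfBeta (Astar n A))[i] = (partitionOfBeta (Astar n A)).getD i 0 := by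
      rw [List.getD_eq_getElem _ _ hi2]
    rw [this, pOB_getD (Astar n A) (by omega), aE_Astar hA hnA hiL, hcard]
    have hble := bfun_glob_le hA hnA hiL
    have hcle := cntLe_le A 0 i
    unfold bfun
    omega
  rw [hLHS, hRHS]
end Conj

/-! ### Injectivity of `partitionOfBeta` -/

lemma betaSet_pOB (A : Finset ℕ) : betaSet (partitionOfBeta A) = A := by
  unfold betaSet
  rw [pOB_length]
  ext x
  simp only [List.mem_toFinset, List.mem_map, List.mem_range]
  constructor
  · rintro ⟨i, hi, hie⟩
    rw [pOB_getD_add A hi] at hie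
    rw [← hie]
    exact aE_mem A hi
  · intro hx
    obtain ⟨i, hi, hie⟩ := aE_surj A hx
    exact ⟨i, hi, by rw [pOB_getD_add A hi]; exact hie⟩

lemma pOB_injective : Function.Injective partitionOfBeta := by
  intro A B h
  rw [← betaSet_pOB A, ← betaSet_pOB B, h]

/-! ### Forward direction: set-theoretic symmetry -/

lemma nsymm_of_Astar {n : ℕ} {A B : Finset ℕ} (hA : A ⊆ Finset.Icc 1 n)
    (hB : B ⊆ Finset.Icc 1 n) (hBA : B = Astar n A) :
    NSymm n (A \ B) ∧ NSymm n (B \ A) := by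
  have hmemB : ∀ x, x ∈ B ↔ (x < n + 1 ∧ n - x ∉ A) := by
    intro x
    rw [hBA]
    simp [Astar]
  have hAn : ∀ x ∈ A, 1 ≤ x ∧ x ≤ n := fun x hx => Finset.mem_Icc.mp (hA hx)
  constructor
  · unfold NSymm
    ext y
    simp only [Finset.mem_image, Finset.mem_sdiff]
    constructor
    · rintro ⟨x, ⟨⟨hxA, hxB⟩, hxy⟩⟩
      rw [hmemB x] at hxB
      have hx := hAn x hxA
      have hnx : n - x ∈ A := by
        by_contra hc
        exact hxB ⟨by omega, hc⟩
      subst hxy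
      refine ⟨hnx, ?_⟩
      rw [hmemB]
      push_neg
      intro _
      rw [show n - (n - x) = x by omega]
      exact hxA
    · rintro ⟨hyA, hyB⟩
      rw [hmemB y] at hyB
      have hy := hAn y hyA
      have hny : n - y ∈ A := by
        by_contra hc
        exact hyB ⟨by omega, hc⟩
      refine ⟨n - y, ⟨⟨hny, ?_⟩, by omega⟩⟩
      rw [hmemB]
      push_neg
      intro _
      rw [show n - (n - y) = y by omega]
      exact hyA
  · unfold NSymm
    ext y
    simp only [Finset.mem_image, Finset.mem_sdiff]
    constructor
    · rintro ⟨x, ⟨⟨hxB, hxA⟩, hxy⟩⟩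
      have hx' := (hmemB x).mp hxB
      have hx1 := (hAn x) -- unused shape
      subst hxy
      constructor
      · rw [hmemB]
        constructor
        · omega
        · rw [show n - (n - x) = x by omega]
          exact hxA
      · exact hx'.2
    · rintro ⟨hyB, hyA⟩
      have hy' := (hmemB y).mp hyB
      refine ⟨n - y, ⟨⟨?_, hy'.2⟩, by omega⟩⟩
      rw [hmemB]
      constructor
      · omega
      · rw [show n - (n - y) = y by omega]
        exact hyA

/-! ### Laurent polynomial machinery -/

namespace HookLaurent

open LaurentPolynomial

noncomputable def chi (S : Finset ℕ) : LaurentPolynomial ℤ := ∑ a ∈ S, T (a : ℤ)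
noncomputable def chib (S : Finset ℕ) : LaurentPolynomial ℤ := ∑ a ∈ S, T (-(a : ℤ))
noncomputable def Rp (S : Finset ℕ) : LaurentPolynomial ℤ :=
  ∑ a ∈ S, ∑ b ∈ (Finset.range a).filter (· ∉ S), T ((a:ℤ) - b)
noncomputable def Rpb (S : Finset ℕ) : LaurentPolynomial ℤ :=
  ∑ a ∈ S, ∑ b ∈ (Finset.range a).filter (· ∉ S), T ((b:ℤ) - a)
noncomputable def Dn (S : Finset ℕ) : LaurentPolynomial ℤ :=
  ∑ a ∈ S, ∑ b ∈ S.filter (· < a), T ((a:ℤ) - b)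
noncomputable def Dnb (S : Finset ℕ) : LaurentPolynomial ℤ :=
  ∑ a ∈ S, ∑ b ∈ S.filter (· < a), T ((b:ℤ) - a)
noncomputable def Tup (S : Finset ℕ) : LaurentPolynomial ℤ :=
  ∑ a ∈ S, ∑ b ∈ Finset.range a, T ((a:ℤ) - b)
noncomputable def Tupb (S : Finset ℕ) : LaurentPolynomial ℤ :=
  ∑ a ∈ S, ∑ b ∈ Finset.range a, T ((b:ℤ) - a)

lemma Tup_eq (S : Finset ℕ) : Tup S = Rp S + Dn S := by
  unfold Tup Rp Dn
  rw [← Finset.sum_add_distrib]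
  apply Finset.sum_congr rfl
  intro a _
  rw [add_comm, ← Finset.sum_filter_add_sum_filter_not (Finset.range a) (· ∈ S)]
  congr 1
  rw [range_filter_mem_eq]

lemma Tupb_eq (S : Finset ℕ) : Tupb S = Rpb S + Dnb S := by
  unfold Tupb Rpb Dnb
  rw [← Finset.sum_add_distrib]
  apply Finset.sum_congr rfl
  intro a _
  rw [add_comm, ← Finset.sum_filter_add_sum_filter_not (Finset.range a) (· ∈ S)]
  congr 1
  rw [range_filter_mem_eq]

lemma inner_geom (a : ℕ) :
    ∑ b ∈ Finset.range a, T ((a:ℤ) - b) = T 1 * ∑ j ∈ Finset.range a, (T (R := ℤ) 1) ^ j := by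
  rw [← Finset.sum_range_reflect (fun b => T ((a:ℤ) - b)) a, Finset.mul_sum]
  apply Finset.sum_congr rfl
  intro j hj
  rw [Finset.mem_range] at hj
  have h1 : (a:ℤ) - ((a - 1 - j : ℕ) : ℤ) = (j:ℤ) + 1 := by
    have : ((a - 1 - j : ℕ) : ℤ) = (a:ℤ) - 1 - j := by push_cast; omega
    rw [this]; ring
  rw [h1, T_pow, mul_one, ← T_add]
  ring_nf

lemma inner_geomb (a : ℕ) :
    ∑ b ∈ Finset.range a, T ((b:ℤ) - a) = T (-(a:ℤ)) * ∑ j ∈ Finset.range a, (T (R := ℤ) 1) ^ j := by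
  rw [Finset.mul_sum]
  apply Finset.sum_congr rfl
  intro j hj
  rw [T_pow, mul_one, ← T_add]
  congr 1
  ring

lemma one_sub_T_mul_geom (a : ℕ) :
    (1 - T (R := ℤ) 1) * ∑ j ∈ Finset.range a, (T (R := ℤ) 1) ^ j = 1 - T (a:ℤ) := by
  have := geom_sum_mul (T (R := ℤ) 1) a
  have h2 : (T (R := ℤ) 1) ^ a = T (a:ℤ) := by rw [T_pow, mul_one]
  linear_combination -this - h2

lemma Tup_identity (S : Finset ℕ) :
    (1 - T 1) * Tup S = (S.card : LaurentPolynomial ℤ) * T 1 - T 1 * chi S := by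
  unfold Tup chi
  rw [Finset.mul_sum]
  have : ∀ a ∈ S, (1 - T (R := ℤ) 1) * ∑ b ∈ Finset.range a, T ((a:ℤ) - b)
      = T 1 - T 1 * T (a:ℤ) := by
    intro a _
    rw [inner_geom, ← mul_assoc, mul_comm (1 - T (R := ℤ) 1) (T 1), mul_assoc,
      one_sub_T_mul_geom]
    ring
  rw [Finset.sum_congr rfl this, Finset.sum_sub_distrib, Finset.sum_const, ← Finset.mul_sum]
  rw [nsmul_eq_mul]

lemma Tupb_identity (S : Finset ℕ) :
    (1 - T 1) * Tupb S = chib S - (S.card : LaurentPolynomial ℤ) := by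
  unfold Tupb chib
  rw [Finset.mul_sum]
  have : ∀ a ∈ S, (1 - T (R := ℤ) 1) * ∑ b ∈ Finset.range a, T ((b:ℤ) - a)
      = T (R := ℤ) (-(a:ℤ)) - 1 := by
    intro a _
    rw [inner_geomb, ← mul_assoc, mul_comm (1 - T (R := ℤ) 1) (T (-(a:ℤ))), mul_assoc,
      one_sub_T_mul_geom]
    have hTT : T (R := ℤ) (-(a:ℤ)) * T (a:ℤ) = 1 := by rw [← T_add]; simp
    linear_combination -hTT
  rw [Finset.sum_congr rfl this, Finset.sum_sub_distrib, Finset.sum_const]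
  rw [nsmul_eq_mul, mul_one]

lemma sum_split_lt_eq_gt {M : Type*} [AddCommMonoid M] (S : Finset ℕ) {a : ℕ} (ha : a ∈ S)
    (f : ℕ → M) :
    ∑ c ∈ S, f c = (∑ c ∈ S.filter (· < a), f c) + f a + ∑ c ∈ S.filter (a < ·), f c := by
  rw [← Finset.sum_filter_add_sum_filter_not S (· < a)]
  have h1 : S.filter (fun c => ¬ c < a) = insert a (S.filter (a < ·)) := by
    ext c
    simp only [Finset.mem_filter, Finset.mem_insert]
    constructor
    · rintro ⟨hc, hca⟩
      rcases Nat.eq_or_lt_of_le (by omega : a ≤ c) with h | h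
      · exact Or.inl h.symm
      · exact Or.inr ⟨hc, h⟩
    · rintro (h | ⟨hc, hca⟩)
      · subst h; exact ⟨ha, by omega⟩
      · exact ⟨hc, by omega⟩
  rw [h1, Finset.sum_insert (by simp), ← add_assoc]

lemma chi_mul_chib (S : Finset ℕ) :
    chi S * chib S = (S.card : LaurentPolynomial ℤ) + Dn S + Dnb S := by
  unfold chi chib Dn Dnb
  rw [Finset.sum_mul_sum]
  have hterm : ∀ a ∈ S, ∀ c ∈ S, T (R := ℤ) (a:ℤ) * T (-(c:ℤ)) = T ((a:ℤ) - c) := by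
    intro a _ c _
    rw [← T_add, sub_eq_add_neg]
  have h1 : ∑ a ∈ S, ∑ c ∈ S, T (R := ℤ) (a:ℤ) * T (-(c:ℤ))
      = ∑ a ∈ S, ∑ c ∈ S, T ((a:ℤ) - c) :=
    Finset.sum_congr rfl (fun a ha => Finset.sum_congr rfl (fun c hc => hterm a ha c hc))
  rw [h1]
  have h2 : ∀ a ∈ S, ∑ c ∈ S, T (R := ℤ) ((a:ℤ) - c)
      = (∑ c ∈ S.filter (· < a), T ((a:ℤ) - c)) + 1 + ∑ c ∈ S.filter (a < ·), T ((a:ℤ) - c) := by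
    intro a ha
    rw [sum_split_lt_eq_gt S ha]
    simp
  rw [Finset.sum_congr rfl h2]
  rw [Finset.sum_add_distrib, Finset.sum_add_distrib, Finset.sum_const, nsmul_eq_mul, mul_one]
  have h3 : ∑ a ∈ S, ∑ c ∈ S.filter (a < ·), T (R := ℤ) ((a:ℤ) - c)
      = ∑ c ∈ S, ∑ a ∈ S.filter (· < c), T ((a:ℤ) - c) := by
    apply Finset.sum_comm'
    intro a c
    simp only [Finset.mem_filter]
    tauto
  rw [h3]
  ring

lemma invert_Rp (S : Finset ℕ) : invert (Rp S) = Rpb S := by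
  unfold Rp Rpb
  rw [map_sum]
  apply Finset.sum_congr rfl
  intro a _
  rw [map_sum]
  apply Finset.sum_congr rfl
  intro b _
  rw [invert_T]
  congr 1
  ring

lemma chi_symm {n : ℕ} {C : Finset ℕ} (hC : C ⊆ Finset.Icc 1 n) (hsym : NSymm n C) :
    chi C = T (n:ℤ) * chib C := by
  unfold NSymm at hsym
  unfold chi chib
  rw [Finset.mul_sum]
  conv_lhs => rw [← hsym]
  rw [Finset.sum_image (by
    intro x hx y hy hxy
    have hx' := Finset.mem_Icc.mp (hC hx)
    have hy' := Finset.mem_Icc.mp (hC hy)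
    simp only at hxy
    omega)]
  apply Finset.sum_congr rfl
  intro x hx
  have hx' := Finset.mem_Icc.mp (hC hx)
  rw [← T_add]
  congr 1
  push_cast
  omega

end HookLaurent

namespace HookLaurent
open LaurentPolynomial

lemma T_apply_eq (k x : ℤ) : (T (R := ℤ) k).coeff x = if k = x then 1 else 0 := by
  rw [T_apply]

lemma chib_apply (S : Finset ℕ) (x : ℕ) :
    (chib S).coeff (-(x:ℤ)) = if x ∈ S then 1 else 0 := by
  unfold chib
  rw [AddMonoidAlgebra.coeff_sum, Finset.sum_apply']
  have h1 : ∀ a ∈ S, (T (R := ℤ) (-(a:ℤ))).coeff (-(x:ℤ)) = if a = x then (1:ℤ) else 0 := by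
    intro a _
    rw [T_apply_eq]
    congr 1
    simp only [neg_inj, Int.natCast_inj, eq_iff_iff]
  rw [Finset.sum_congr rfl h1, Finset.sum_ite_eq' S x (fun _ => (1:ℤ))]

lemma chib_inj {A B : Finset ℕ} (h : chib A = chib B) : A = B := by
  ext x
  have := congrArg (fun p : LaurentPolynomial ℤ => p.coeff (-(x:ℤ))) h
  rw [chib_apply, chib_apply] at this
  constructor
  · intro hx
    by_contra hy
    simp [hx, hy] at this
  · intro hy
    by_contra hx
    simp [hx, hy] at this

lemma one_sub_T_ne : (1 : LaurentPolynomial ℤ) - T 1 ≠ 0 := by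
  intro h
  have h2 : (1 : LaurentPolynomial ℤ) = T 1 := by
    have := sub_eq_zero.mp h
    exact this
  have h3 := congrArg (fun p : LaurentPolynomial ℤ => p.coeff (0:ℤ)) h2
  have hL : (1 : LaurentPolynomial ℤ).coeff (0:ℤ) = 1 := by
    exact AddMonoidAlgebra.coeff_one_zero
  have hR : (T (R := ℤ) 1).coeff (0:ℤ) = 0 := by
    rw [T_apply_eq]
    simp
  rw [hL, hR] at h3
  exact one_ne_zero h3

lemma geom_identity (n : ℕ) :
    (1 - T (R := ℤ) 1) * (∑ i ∈ Finset.range (n+1), T (R := ℤ) (i:ℤ)) = 1 - T ((n:ℤ)+1) := by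
  have h1 : ∀ i ∈ Finset.range (n+1), T (R := ℤ) (i:ℤ) = (T (R := ℤ) 1) ^ i := by
    intro i _
    rw [T_pow, mul_one]
  rw [Finset.sum_congr rfl h1, one_sub_T_mul_geom]
  congr 1

end HookLaurent

open HookLaurent LaurentPolynomial in
/-- The backward direction: symmetry of the differences plus equal hooks forces
`B` to be the reflected-complement β-set of `A`. -/
lemma B_eq_Astar {n : ℕ} {A B : Finset ℕ} (hA : A ⊆ Finset.Icc 1 n)
    (hB : B ⊆ Finset.Icc 1 n) (hAB : A ≠ B) (hnA : n ∈ A) (hnB : n ∈ B)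
    (hH : hooks (partitionOfBeta A) = hooks (partitionOfBeta B))
    (hs1 : NSymm n (A \ B)) (hs2 : NSymm n (B \ A)) : B = Astar n A := by
  -- hook multiset identity
  have hRp : Rp A = Rp B := by
    have := congrArg hpol hH
    rw [hpol_hooks, hpol_hooks] at this
    exact this
  have hRpb : Rpb A = Rpb B := by
    rw [← invert_Rp, ← invert_Rp, hRp]
  -- symmetry identity
  have eA : chi (A ∩ B) + chi (A \ B) = chi A := by
    unfold chi; exact Finset.sum_inter_add_sum_sdiff A B _
  have eB : chi (A ∩ B) + chi (B \ A) = chi B := by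
    unfold chi; rw [Finset.inter_comm]; exact Finset.sum_inter_add_sum_sdiff B A _
  have eAb : chib (A ∩ B) + chib (A \ B) = chib A := by
    unfold chib; exact Finset.sum_inter_add_sum_sdiff A B _
  have eBb : chib (A ∩ B) + chib (B \ A) = chib B := by
    unfold chib; rw [Finset.inter_comm]; exact Finset.sum_inter_add_sum_sdiff B A _
  have hCs : chi (A \ B) = T (n:ℤ) * chib (A \ B) :=
    chi_symm (le_trans (Finset.sdiff_subset) hA) hs1
  have hDs : chi (B \ A) = T (n:ℤ) * chib (B \ A) :=
    chi_symm (le_trans (Finset.sdiff_subset) hB) hs2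
  have h8 : chi A - chi B = T (n:ℤ) * (chib A - chib B) := by
    linear_combination -eA + eB + hCs - hDs + T (n:ℤ) * eAb - T (n:ℤ) * eBb
  -- the master identity
  have h3A := chi_mul_chib A
  have h3B := chi_mul_chib B
  have h1A := Tup_identity A
  have h1B := Tup_identity B
  have h2A := Tupb_identity A
  have h2B := Tupb_identity B
  have h4A := Tup_eq A
  have h4B := Tup_eq B
  have h5A := Tupb_eq A
  have h5B := Tupb_eq B
  have key : (1 - T 1) * (chi A * chib A - chi B * chib B)
      = (chib A - chib B) - T 1 * (chi A - chi B) := by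
    linear_combination (1 - T (R := ℤ) 1) * h3A - (1 - T (R := ℤ) 1) * h3B
      + (h1A - h1B) + (h2A - h2B)
      + (h4B - h4A) * (1 - T (R := ℤ) 1) + (h5B - h5A) * (1 - T (R := ℤ) 1)
      - hRp * (1 - T (R := ℤ) 1) - hRpb * (1 - T (R := ℤ) 1)
  have hTn : T (R := ℤ) 1 * T (n:ℤ) = T ((n:ℤ)+1) := by
    rw [← T_add]
    congr 1
    ring
  have main : (chib A - chib B) * ((1 - T 1) * (T (n:ℤ) * chib A + chi B))
      = (chib A - chib B) * (1 - T ((n:ℤ)+1)) := by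
    linear_combination key - ((1 - T (R := ℤ) 1) * chib A + T 1) * h8
      - (chib A - chib B) * hTn
  have hdb : chib A - chib B ≠ 0 := by
    intro h
    exact hAB (chib_inj (sub_eq_zero.mp h))
  have step1 : (1 - T 1) * (T (n:ℤ) * chib A + chi B) = 1 - T ((n:ℤ)+1) :=
    mul_left_cancel₀ hdb main
  have step2 : T (n:ℤ) * chib A + chi B = ∑ i ∈ Finset.range (n+1), T (R := ℤ) (i:ℤ) := by
    apply mul_left_cancel₀ one_sub_T_ne
    rw [step1, geom_identity]
  -- coefficient extraction
  have hext : ∀ x : ℕ, x ≤ n →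
      ((if n - x ∈ A then (1:ℤ) else 0) + (if x ∈ B then (1:ℤ) else 0) = 1) := by
    intro x hx
    have happ := congrArg (fun p : LaurentPolynomial ℤ => p.coeff (x:ℤ)) step2
    have hL : (T (R := ℤ) (n:ℤ) * chib A + chi B).coeff ((x:ℤ))
        = (if n - x ∈ A then (1:ℤ) else 0) + (if x ∈ B then (1:ℤ) else 0) := by
      have hTchib : T (R := ℤ) (n:ℤ) * chib A = ∑ a ∈ A, T ((n:ℤ) - a) := by
        unfold chib
        rw [Finset.mul_sum]
        apply Finset.sum_congr rfl
        intro a _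
        rw [← T_add, sub_eq_add_neg]
      rw [hTchib]
      have hadd : ((∑ a ∈ A, T (R := ℤ) ((n:ℤ) - a)) + chi B).coeff (x:ℤ)
          = (∑ a ∈ A, T (R := ℤ) ((n:ℤ) - a)).coeff (x:ℤ) + (chi B).coeff (x:ℤ) := rfl
      rw [hadd]
      congr 1
      · rw [AddMonoidAlgebra.coeff_sum, Finset.sum_apply']
        have h2 : ∀ a ∈ A, (T (R := ℤ) ((n:ℤ) - a)).coeff (x:ℤ) = if a = n - x then (1:ℤ) else 0 := by
          intro a ha
          rw [T_apply_eq]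
          have han : a ≤ n := (Finset.mem_Icc.mp (hA ha)).2
          congr 1
          simp only [eq_iff_iff]
          constructor
          · intro h; omega
          · intro h; omega
        rw [Finset.sum_congr rfl h2, Finset.sum_ite_eq' A (n-x) (fun _ => (1:ℤ))]
      · rw [chi, AddMonoidAlgebra.coeff_sum, Finset.sum_apply']
        have h3 : ∀ b ∈ B, (T (R := ℤ) (b:ℤ)).coeff (x:ℤ) = if b = x then (1:ℤ) else 0 := by
          intro b _
          rw [T_apply_eq]
          congr 1
          simp only [Int.natCast_inj, eq_iff_iff]
        rw [Finset.sum_congr rfl h3, Finset.sum_ite_eq' B x (fun _ => (1:ℤ))]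
    have hR : (∑ i ∈ Finset.range (n+1), T (R := ℤ) (i:ℤ)).coeff ((x:ℤ)) = 1 := by
      rw [AddMonoidAlgebra.coeff_sum, Finset.sum_apply']
      have h4 : ∀ i ∈ Finset.range (n+1), (T (R := ℤ) (i:ℤ)).coeff (x:ℤ)
          = if i = x then (1:ℤ) else 0 := by
        intro i _
        rw [T_apply_eq]
        congr 1
        simp only [Int.natCast_inj, eq_iff_iff]
      rw [Finset.sum_congr rfl h4, Finset.sum_ite_eq' (Finset.range (n+1)) x (fun _ => (1:ℤ))]
      simp only [Finset.mem_range]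
      rw [if_pos (by omega)]
    rw [← hL, happ, hR]
  -- conclude `B = Astar n A`
  ext x
  simp only [Astar, Finset.mem_filter, Finset.mem_range]
  constructor
  · intro hxB
    have hxn : x ≤ n := (Finset.mem_Icc.mp (hB hxB)).2
    have hx1 := hext x hxn
    refine ⟨by omega, ?_⟩
    intro hnx
    simp [hxB, hnx] at hx1
  · rintro ⟨hx1, hx2⟩
    have hx3 := hext x (by omega)
    by_contra hxB
    simp [hxB, hx2] at hx3


/-- Main theorem: for distinct `A, B ⊆ {1,…,n}` with `n ∈ A ∩ B` and
`H(λ_A) = H(λ_B)`, the partitions `λ_A` and `λ_B` are conjugate to each other iff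
`A \ B` and `B \ A` are `n`-symmetric. -/
theorem stmt_5 (n : ℕ) (A B : Finset ℕ) (hA : A ⊆ Finset.Icc 1 n) (hB : B ⊆ Finset.Icc 1 n)
    (hAB : A ≠ B) (hnA : n ∈ A) (hnB : n ∈ B)
    (hH : hooks (partitionOfBeta A) = hooks (partitionOfBeta B)) :
    conjugatePart (partitionOfBeta A) = partitionOfBeta B ↔
      NSymm n (A \ B) ∧ NSymm n (B \ A) := by
  constructor
  · intro hconj
    have h1 : partitionOfBeta (Astar n A) = partitionOfBeta B := by
      rw [← conj_pOB hA hnA, hconj]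
    exact nsymm_of_Astar hA hB (pOB_injective h1).symm
  · rintro ⟨hs1, hs2⟩
    rw [conj_pOB hA hnA, ← B_eq_Astar hA hB hAB hnA hnB hH hs1 hs2]
end

section
/- Let A, B ⊆ {1,…,n} with n ∈ A ∩ B, and suppose λ_A and λ_B are conjugate to each other. Then A \ B and B \ A are n-symmetric sets. -/

lemma my_headD_eq_getD (l : List ℕ) : l.headD 0 = l.getD 0 0 := by cases l <;> rfl

lemma my_range_map_getD (l : List ℕ) :
    (List.range l.length).map (fun i => l.getD i 0) = l := by
  apply List.ext_getElem
  · simp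
  · intro i h1 h2
    simp only [List.getElem_map, List.getElem_range]
    rw [List.getD_eq_getElem _ _ h2]

lemma my_mapIdx_eq_range_map (l : List ℕ) (f : ℕ → ℕ → ℕ) :
    l.mapIdx f = (List.range l.length).map (fun i => f i (l.getD i 0)) := by
  apply List.ext_getElem
  · simp
  · intro i h1 h2
    have hi : i < l.length := by simpa using h1
    simp only [List.getElem_mapIdx, List.getElem_map, List.getElem_range]
    rw [List.getD_eq_getElem _ _ hi]

lemma my_strictDesc_getD {l : List ℕ} (h : l.Pairwise (· > ·)) :
    ∀ i k, i ≤ k → k < l.length → l.getD k 0 + (k - i) ≤ l.getD i 0 := by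
  intro i k
  induction k with
  | zero => intro hik _; interval_cases i; simp
  | succ k ih =>
    intro hik hk
    rcases Nat.eq_or_lt_of_le hik with rfl | hlt
    · simp
    · have hk' : k < l.length := by omega
      have h1 : l.getD (k+1) 0 < l.getD k 0 := by
        rw [List.getD_eq_getElem _ _ hk, List.getD_eq_getElem _ _ hk']
        have := h.rel_get_of_lt (a := ⟨k, hk'⟩) (b := ⟨k+1, hk⟩) (by simp)
        simpa using this
      have := ih (by omega) hk'
      omega

lemma my_filter_length_iff {l : List ℕ} (h : l.Pairwise (· > ·)) (y : ℕ) :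
    ∀ i, i < l.length → (y < l.getD i 0 ↔ i < (l.filter (fun x => decide (y < x))).length) := by
  induction l with
  | nil => simp
  | cons a t ih =>
    rw [List.pairwise_cons] at h
    intro i hi
    by_cases hya : y < a
    · rw [List.filter_cons_of_pos (by simpa using hya)]
      cases i with
      | zero => simpa using hya
      | succ i =>
        simp only [List.getD_cons_succ, List.length_cons]
        rw [ih h.2 i (by simpa using hi)]
        omega
    · have hall : ∀ x ∈ a :: t, ¬ y < x := by
        intro x hx
        rcases List.mem_cons.mp hx with rfl | hx
        · exact hya
        · have := h.1 x hx; omega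
      have hnil : (a :: t).filter (fun x => decide (y < x)) = [] := by
        rw [List.filter_eq_nil_iff]
        intro x hx
        simpa using hall x hx
      rw [hnil]
      simp only [List.length_nil]
      constructor
      · intro hy
        have hmem : (a :: t).getD i 0 ∈ (a :: t) := by
          rw [List.getD_eq_getElem _ _ hi]; exact List.getElem_mem _
        exact absurd hy (hall _ hmem)
      · omega

lemma my_filter_range_length (q : ℕ → Bool) : ∀ (m r : ℕ), r ≤ m →
    (∀ i < m, q i = true ↔ i < r) →
    ((List.range m).filter q).length = r := by
  intro m
  induction m with
  | zero => intro r hr _; interval_cases r; simp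
  | succ m ih =>
    intro r hr hq
    rw [List.range_succ, List.filter_append]
    by_cases hrm : r = m + 1
    · subst hrm
      have hqm : q m = true := (hq m (by omega)).mpr (by omega)
      have := ih m le_rfl (fun i hi => ⟨fun _ => hi, fun _ => (hq i (by omega)).mpr (by omega)⟩)
      simp [List.filter_cons, hqm, this]
    · have hqm : q m = false := by
        have h2 := hq m (by omega)
        cases hqmv : q m
        · rfl
        · exfalso; have := h2.mp hqmv; omega
      have := ih r (by omega) (fun i hi => hq i (by omega))
      simp [List.filter_cons, hqm, this]

lemma my_sorted_desc (s : Finset ℕ) : (s.sort (· ≤ ·)).reverse.Pairwise (· > ·) := by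
  have := (Finset.sortedLT_sort s).pairwise
  rw [List.pairwise_reverse]
  exact this.imp (fun h => h)

lemma my_betaSet_partitionOfBeta (B : Finset ℕ) (hne : B.Nonempty) :
    betaSet (partitionOfBeta B) = B := by
  set b := (B.sort (· ≤ ·)).reverse with hb
  have hsort : b.Pairwise (· > ·) := my_sorted_desc B
  have hlen : b.length = B.card := by simp [hb]
  have hBfin : b.toFinset = B := by rw [hb, List.toFinset_reverse, Finset.sort_toFinset]
  have hm1 : 1 ≤ B.card := Finset.card_pos.mpr hne
  have hl : partitionOfBeta B = (List.range B.card).map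
      (fun i => b.getD i 0 - (B.card - 1 - i)) := by
    unfold partitionOfBeta
    rw [← hb, my_mapIdx_eq_range_map, hlen]
  unfold betaSet
  rw [hl]
  simp only [List.length_map, List.length_range]
  have hmap : (List.range B.card).map (fun i =>
      ((List.range B.card).map (fun i => b.getD i 0 - (B.card - 1 - i))).getD i 0
        + (B.card - 1 - i))
      = (List.range B.card).map (fun i => b.getD i 0) := by
    apply List.map_congr_left
    intro i hi
    rw [List.mem_range] at hi
    have hgd : ((List.range B.card).map (fun i => b.getD i 0 - (B.card - 1 - i))).getD i 0
        = b.getD i 0 - (B.card - 1 - i) := by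
      rw [List.getD_eq_getElem _ _ (by simpa using hi)]
      simp only [List.getElem_map, List.getElem_range]
    rw [hgd]
    have := my_strictDesc_getD hsort i (B.card - 1) (by omega) (by omega)
    omega
  rw [hmap, ← hlen, my_range_map_getD, hBfin]

lemma my_main (n : ℕ) (A : Finset ℕ) (hA : A ⊆ Finset.Icc 1 n) (hnA : n ∈ A) :
    betaSet (conjugatePart (partitionOfBeta A)) =
      (Finset.Icc 0 n \ A).image (fun x => n - x) := by
  set m := A.card with hmdef
  set a := (A.sort (· ≤ ·)).reverse with hb
  have hsort : a.Pairwise (· > ·) := my_sorted_desc A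
  have hlen : a.length = m := by simp [hb, hmdef]
  have hAfin : a.toFinset = A := by rw [hb, List.toFinset_reverse, Finset.sort_toFinset]
  have hm1 : 1 ≤ m := Finset.card_pos.mpr ⟨n, hnA⟩
  have hmn : m ≤ n := by
    have := Finset.card_le_card hA
    simpa [hmdef] using this
  have hmema : ∀ x ∈ a, 1 ≤ x ∧ x ≤ n := by
    intro x hx
    have : x ∈ A := by rw [← hAfin]; exact List.mem_toFinset.mpr hx
    exact Finset.mem_Icc.mp (hA this)
  have h0lt : 0 < a.length := by omega
  have ha0 : a.getD 0 0 = n := by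
    have hna : n ∈ a := by rw [← List.mem_toFinset, hAfin]; exact hnA
    obtain ⟨i, hi, hin⟩ := List.getElem_of_mem hna
    have h0n : a.getD 0 0 ≤ n := by
      refine (hmema _ ?_).2
      rw [List.getD_eq_getElem _ _ h0lt]
      exact List.getElem_mem _
    cases i with
    | zero => rw [List.getD_eq_getElem _ _ h0lt, hin]
    | succ j =>
      exfalso
      have := my_strictDesc_getD hsort 0 (j+1) (by omega) hi
      rw [List.getD_eq_getElem _ _ hi, hin] at this
      omega
  have hl : partitionOfBeta A = (List.range m).map
      (fun i => a.getD i 0 - (m - 1 - i)) := by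
    unfold partitionOfBeta
    rw [← hmdef, ← hb, my_mapIdx_eq_range_map, hlen]
  set N := n - m + 1 with hNdef
  have hlhead : (partitionOfBeta A).headD 0 = N := by
    rw [my_headD_eq_getD, hl, List.getD_eq_getElem _ _ (by simp; omega)]
    simp only [List.getElem_map, List.getElem_range]
    omega
  set c : ℕ → ℕ := fun j => ((partitionOfBeta A).filter (fun p => decide (j + 1 ≤ p))).length
    with hcdef
  have hcp : conjugatePart (partitionOfBeta A) = (List.range N).map c := by
    unfold conjugatePart
    rw [hlhead]
  rw [hcp]
  -- subset direction
  have hsub : (Finset.Icc 0 n \ A).image (fun x => n - x) ⊆ betaSet ((List.range N).map c) := by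
    intro x hx
    simp only [Finset.mem_image, Finset.mem_sdiff, Finset.mem_Icc] at hx
    obtain ⟨y, ⟨⟨-, hyn⟩, hyA⟩, rfl⟩ := hx
    have hya : y ∉ a := fun hc => hyA (by rw [← hAfin]; exact List.mem_toFinset.mpr hc)
    set r := (a.filter (fun t => decide (y < t))).length with hrdef
    have hrm : r ≤ m := by rw [hrdef, ← hlen]; exact List.length_filter_le _ _
    have hidx : ∀ i, i < m → (y < a.getD i 0 ↔ i < r) := by
      intro i hi
      exact my_filter_length_iff hsort y i (by omega)
    have hray : ∀ i, r ≤ i → i < m → a.getD i 0 < y := by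
      intro i hri him
      have h1 : ¬ y < a.getD i 0 := fun hc => by have := (hidx i him).mp hc; omega
      have h2 : a.getD i 0 ≠ y := by
        intro hc
        apply hya
        rw [← hc, List.getD_eq_getElem _ _ (by omega)]
        exact List.getElem_mem _
      omega
    have hmyr : m ≤ y + r := by
      by_cases hc : r = m
      · omega
      · have hrm' : r < m := by omega
        have h1 := my_strictDesc_getD hsort r (m-1) (by omega) (by omega)
        have h2 := hray r le_rfl hrm'
        have h3 : 1 ≤ a.getD (m-1) 0 := by
          refine (hmema _ ?_).1
          rw [List.getD_eq_getElem _ _ (by omega)]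
          exact List.getElem_mem _
        omega
    have hyrn : y + r ≤ n := by
      by_cases hc : r = 0
      · omega
      · have h1 := my_strictDesc_getD hsort 0 (r-1) (by omega) (by omega)
        have h2 : y < a.getD (r-1) 0 := (hidx (r-1) (by omega)).mpr (by omega)
        rw [ha0] at h1
        omega
    set j := y + r - m with hjdef
    have hjN : j < N := by omega
    have hcj : c j = r := by
      rw [hcdef]
      simp only
      rw [hl, List.filter_map, List.length_map]
      apply my_filter_range_length _ m r hrm
      intro i hi
      simp only [Function.comp, decide_eq_true_eq]
      constructor
      · intro hle
        by_contra hc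
        have hri : r ≤ i := by omega
        have h1 := my_strictDesc_getD hsort r i hri (by omega)
        have h2 := hray r le_rfl (by omega)
        omega
      · intro hir
        have h1 := my_strictDesc_getD hsort i (r-1) (by omega) (by omega)
        have h2 : y < a.getD (r-1) 0 := (hidx (r-1) (by omega)).mpr (by omega)
        omega
    unfold betaSet
    rw [List.mem_toFinset]
    simp only [List.length_map, List.length_range]
    refine List.mem_map.mpr ⟨j, List.mem_range.mpr hjN, ?_⟩
    have hgd : ((List.range N).map c).getD j 0 = c j := by
      rw [List.getD_eq_getElem _ _ (by simpa using hjN)]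
      simp only [List.getElem_map, List.getElem_range]
    rw [hgd, hcj]
    show r + (N - 1 - j) = n - y
    omega
  -- cardinality
  have hcard1 : (betaSet ((List.range N).map c)).card ≤ N := by
    unfold betaSet
    calc _ ≤ _ := List.toFinset_card_le _
    _ ≤ N := by simp
  have hcard2 : ((Finset.Icc 0 n \ A).image (fun x => n - x)).card = N := by
    rw [Finset.card_image_of_injOn, Finset.card_sdiff_of_subset]
    · simp; omega
    · exact fun x hx => Finset.mem_Icc.mpr ⟨Nat.zero_le _, (Finset.mem_Icc.mp (hA hx)).2⟩
    · intro x hx y hy hxy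
      have hxy' : n - x = n - y := hxy
      simp only [Finset.mem_coe, Finset.mem_sdiff, Finset.mem_Icc] at hx hy
      omega
  exact (Finset.eq_of_subset_of_card_le hsub (by omega)).symm

/-- Necessity: if `λ_A` and `λ_B` are conjugate, then `A \ B` and `B \ A` are
`n`-symmetric sets. -/
theorem stmt_6 (n : ℕ) (A B : Finset ℕ) (hA : A ⊆ Finset.Icc 1 n) (hB : B ⊆ Finset.Icc 1 n)
    (hnA : n ∈ A) (hnB : n ∈ B)
    (hconj : conjugatePart (partitionOfBeta A) = partitionOfBeta B) :
    NSymm n (A \ B) ∧ NSymm n (B \ A) := by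
  have hBeq : B = (Finset.Icc 0 n \ A).image (fun x => n - x) := by
    rw [← my_betaSet_partitionOfBeta B ⟨n, hnB⟩, ← hconj, my_main n A hA hnA]
  have memB : ∀ x, x ≤ n → (x ∈ B ↔ (n - x) ∉ A) := by
    intro x hx
    rw [hBeq]
    simp only [Finset.mem_image, Finset.mem_sdiff, Finset.mem_Icc]
    constructor
    · rintro ⟨y, ⟨⟨-, hy⟩, hyA⟩, rfl⟩
      have : n - (n - y) = y := by omega
      rw [this]
      exact hyA
    · intro h
      exact ⟨n - x, ⟨⟨by omega, by omega⟩, h⟩, by omega⟩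
  have hAn : ∀ x, x ∈ A → x ≤ n := fun x hx => (Finset.mem_Icc.mp (hA hx)).2
  have hBn : ∀ x, x ∈ B → x ≤ n := fun x hx => (Finset.mem_Icc.mp (hB hx)).2
  constructor
  · unfold NSymm
    ext z
    simp only [Finset.mem_image, Finset.mem_sdiff]
    constructor
    · rintro ⟨x, ⟨hxA, hxB⟩, rfl⟩
      have hxn := hAn x hxA
      have h1 : n - x ∈ A := by
        by_contra hc
        exact hxB ((memB x hxn).mpr hc)
      refine ⟨h1, fun hcB => ?_⟩
      have := (memB (n - x) (by omega)).mp hcB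
      rw [show n - (n - x) = x by omega] at this
      exact this hxA
    · rintro ⟨hzA, hzB⟩
      have hzn := hAn z hzA
      have h1 : n - z ∈ A := by
        by_contra hc
        exact hzB ((memB z hzn).mpr hc)
      refine ⟨n - z, ⟨h1, fun hcB => ?_⟩, by omega⟩
      have := (memB (n - z) (by omega)).mp hcB
      rw [show n - (n - z) = z by omega] at this
      exact this hzA
  · unfold NSymm
    ext z
    simp only [Finset.mem_image, Finset.mem_sdiff]
    constructor
    · rintro ⟨x, ⟨hxB, hxA⟩, rfl⟩
      have hxn := hBn x hxB
      have h1 : n - x ∉ A := (memB x hxn).mp hxB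
      refine ⟨(memB (n - x) (by omega)).mpr ?_, h1⟩
      rw [show n - (n - x) = x by omega]
      exact hxA
    · rintro ⟨hzB, hzA⟩
      have hzn := hBn z hzB
      have h1 : n - z ∉ A := (memB z hzn).mp hzB
      refine ⟨n - z, ⟨(memB (n - z) (by omega)).mpr ?_, h1⟩, by omega⟩
      rw [show n - (n - z) = z by omega]
      exact hzA
end

section
/- Let A, B ⊆ {1,…,n} with n ∈ A ∩ B, A' = I_n \ A, B' = I_n \ B. Set C = A \ B, D = B \ A, and suppose C = n − C and D = n − D. Then for every k with 1 ≤ k ≤ n, the multiplicity of k in H(λ_A) minus the multiplicity of k in H(λ_B) equals (C + (n − A'))_{n+k} − (B + C)_{n+k} − (D + (n − A'))_{n+k} + (D + B)_{n+k}, where for multisets M, N of integers, M + N = {x + y : x ∈ M, y ∈ N} (with multiplicity) and M_k denotes the multiplicity of k in M. -/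
/-! ### Auxiliary lemmas -/

/-- gap count: number of non-elements of `S` below `x`. -/
def gapCount (S : Finset ℕ) (x : ℕ) : ℕ := ((Finset.range x).filter (fun y => y ∉ S)).card

lemma gapCount_eq (S : Finset ℕ) (x : ℕ) :
    gapCount S x = x - (S.filter (fun y => y < x)).card := by
  have h1 : S.filter (fun y => y < x) = (Finset.range x).filter (fun y => y ∈ S) := by
    ext y
    simp [Finset.mem_filter, Finset.mem_range, and_comm]
  have h2 := Finset.card_filter_add_card_filter_not (s := Finset.range x)
    (p := fun y => y ∈ S)
  rw [Finset.card_range] at h2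
  rw [gapCount, h1]
  omega

lemma gapCount_lt (S : Finset ℕ) {x x' : ℕ} (hx : x ∉ S) (h : x < x') :
    gapCount S x < gapCount S x' := by
  apply Finset.card_lt_card
  constructor
  · exact Finset.filter_subset_filter _ (by simp [Finset.range_subset]; omega)
  · intro hsub
    have hxmem : x ∈ Finset.filter (fun y => y ∉ S) (Finset.range x') := by
      simp [Finset.mem_filter, Finset.mem_range, hx, h]
    have := hsub hxmem
    simp [Finset.mem_filter, Finset.mem_range] at this

lemma gapCount_mono (S : Finset ℕ) {x x' : ℕ} (h : x ≤ x') :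
    gapCount S x ≤ gapCount S x' := by
  apply Finset.card_le_card
  exact Finset.filter_subset_filter _ (by simp [Finset.range_subset, h]; omega)

lemma sort_max_cons (A : Finset ℕ) (h : A.Nonempty) :
    (A.sort (· ≤ ·)).reverse
      = A.max' h :: ((A.erase (A.max' h)).sort (· ≤ ·)).reverse := by
  have key : A.sort (· ≤ ·) = ((A.erase (A.max' h)).sort (· ≤ ·)) ++ [A.max' h] := by
    refine (fun hp h1 h2 => List.Perm.eq_of_pairwise' (r := (· ≤ · : ℕ → ℕ → Prop)) h1 h2 hp) ?_ ?_ ?_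
    · apply Multiset.coe_eq_coe.mp
      rw [← Multiset.coe_add]
      rw [Finset.sort_eq, Finset.sort_eq, Finset.erase_val]
      conv_lhs => rw [← Multiset.cons_erase (Finset.mem_val.mpr (A.max'_mem h))]
      rw [show ((([A.max' h] : List ℕ)) : Multiset ℕ) = {A.max' h} from rfl, add_comm,
        Multiset.singleton_add]
    · exact Finset.pairwise_sort _ _
    · rw [List.pairwise_append]
      refine ⟨Finset.pairwise_sort _ _, by simp, ?_⟩
      intro a ha b hb
      rw [Finset.mem_sort] at ha
      simp at hb
      subst hb
      exact A.le_max' a (Finset.mem_of_mem_erase ha)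
  rw [key, List.reverse_append]
  simp

lemma partitionOfBeta_cons (A : Finset ℕ) (h : A.Nonempty) :
    partitionOfBeta A
      = (A.max' h - (A.card - 1)) :: partitionOfBeta (A.erase (A.max' h)) := by
  rw [partitionOfBeta, sort_max_cons A h, List.mapIdx_cons]
  congr 1
  rw [partitionOfBeta, Finset.card_erase_of_mem (A.max'_mem h)]
  congr 1
  funext i a
  congr 1
  omega

lemma hooks_cons (x : ℕ) (t : List ℕ) :
    hooks (x :: t)
      = ((List.range x).map
          (fun j => x - j + ((t.filter (fun p => decide (j < p))).length)) : List ℕ)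
        + hooks t := by
  rw [hooks, hooks]
  have hlen : (x :: t).length = t.length + 1 := rfl
  rw [hlen, List.range_succ_eq_map, List.flatMap_cons, List.flatMap_map]
  rw [← Multiset.coe_add]
  rfl

lemma filter_partition_length (S : Finset ℕ) (j : ℕ) :
    ((partitionOfBeta S).filter (fun p => decide (j < p))).length
      = (S.filter (fun s => j < gapCount S s)).card := by
  induction S using Finset.strongInduction with
  | _ S ih =>
    rcases S.eq_empty_or_nonempty with rfl | h
    · simp [partitionOfBeta]
    · have hmem := S.max'_mem h
      set m := S.max' h with hm
      have hcard : (S.erase m).card = S.card - 1 := Finset.card_erase_of_mem hmem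
      have hlt : ∀ s ∈ S.erase m, s < m := by
        intro s hs
        exact lt_of_le_of_ne (S.le_max' s (Finset.mem_of_mem_erase hs))
          (Finset.ne_of_mem_erase hs)
      have hfiltm : S.filter (fun y => y < m) = S.erase m := by
        ext y
        simp only [Finset.mem_filter, Finset.mem_erase]
        constructor
        · rintro ⟨hy, hy2⟩; exact ⟨by omega, hy⟩
        · rintro ⟨hy, hy2⟩; exact ⟨hy2, lt_of_le_of_ne (S.le_max' y hy2) hy⟩
      have hgapm : gapCount S m = m - (S.card - 1) := by
        rw [gapCount_eq, hfiltm, hcard]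
      have herase : ∀ s ∈ S.erase m, gapCount (S.erase m) s = gapCount S s := by
        intro s hs
        rw [gapCount, gapCount]
        congr 1
        apply Finset.filter_congr
        intro y hy
        rw [Finset.mem_range] at hy
        have : y ≠ m := by have := hlt s hs; omega
        simp [Finset.mem_erase, this]
      rw [partitionOfBeta_cons S h, ← hm, List.filter_cons,
        apply_ite List.length, List.length_cons,
        ih (S.erase m) (Finset.erase_ssubset hmem)]
      have hsplit : S.filter (fun s => j < gapCount S s)
          = if j < gapCount S m then insert m ((S.erase m).filter (fun s => j < gapCount S s))
            else (S.erase m).filter (fun s => j < gapCount S s) := by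
        by_cases hjm : j < gapCount S m
        · rw [if_pos hjm]
          ext y
          simp only [Finset.mem_filter, Finset.mem_insert, Finset.mem_erase]
          constructor
          · rintro ⟨hy, hy2⟩
            by_cases hym : y = m
            · exact Or.inl hym
            · exact Or.inr ⟨⟨hym, hy⟩, hy2⟩
          · rintro (rfl | ⟨⟨hy1, hy2⟩, hy3⟩)
            · exact ⟨hmem, hjm⟩
            · exact ⟨hy2, hy3⟩
        · rw [if_neg hjm]
          ext y
          simp only [Finset.mem_filter, Finset.mem_erase]
          constructor
          · rintro ⟨hy, hy2⟩
            refine ⟨⟨?_, hy⟩, hy2⟩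
            rintro rfl
            exact hjm hy2
          · rintro ⟨⟨hy1, hy2⟩, hy3⟩
            exact ⟨hy2, hy3⟩
      have hfcongr : (S.erase m).filter (fun s => j < gapCount (S.erase m) s)
          = (S.erase m).filter (fun s => j < gapCount S s) := by
        apply Finset.filter_congr
        intro s hs
        rw [herase s hs]
      rw [hfcongr, hsplit, hgapm]
      by_cases hj : j < m - (S.card - 1)
      · rw [if_pos (show decide (j < m - (S.card - 1)) = true by simpa using hj),
          if_pos hj, Finset.card_insert_of_notMem (by simp)]
      · rw [if_neg (show ¬ decide (j < m - (S.card - 1)) = true by simpa using hj), if_neg hj]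

lemma row_lemma (a0 : ℕ) (S : Finset ℕ) (hS : ∀ s ∈ S, s < a0) :
    (((List.range (a0 - S.card)).map
        (fun j => (a0 - S.card) - j + (S.filter (fun s => j < gapCount S s)).card) : List ℕ) : Multiset ℕ)
      = (Finset.range a0 \ S).val.map (fun x => a0 - x) := by
  set L := a0 - S.card with hL
  set T := Finset.range a0 \ S with hT
  have hSsub : S ⊆ Finset.range a0 := fun s hs => Finset.mem_range.mpr (hS s hs)
  have hScard : S.card ≤ a0 := by simpa using Finset.card_le_card hSsub
  have hTcard : T.card = L := by rw [hT, Finset.card_sdiff_of_subset hSsub, Finset.card_range]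
  have hmemT : ∀ x ∈ T, x < a0 ∧ x ∉ S := by
    intro x hx
    rw [hT, Finset.mem_sdiff, Finset.mem_range] at hx
    exact hx
  have hga0 : gapCount S a0 = L := by
    have : S.filter (fun y => y < a0) = S := by
      apply Finset.filter_true_of_mem
      intro s hs; exact hS s hs
    rw [gapCount_eq, this, hL]
  have hglt : ∀ x ∈ T, gapCount S x < L := by
    intro x hx
    rw [← hga0]
    exact gapCount_lt S (hmemT x hx).2 (hmemT x hx).1
  have hinj : Set.InjOn (gapCount S) T := by
    intro x hx y hy hxy
    by_contra hne
    rcases Nat.lt_or_ge x y with hlt | hge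
    · exact absurd hxy (Nat.ne_of_lt (gapCount_lt S (hmemT x (by simpa using hx)).2 hlt))
    · have : y < x := by omega
      exact absurd hxy.symm (Nat.ne_of_lt (gapCount_lt S (hmemT y (by simpa using hy)).2 this))
  have himg : T.image (gapCount S) = Finset.range L := by
    apply Finset.eq_of_subset_of_card_le
    · intro z hz
      rw [Finset.mem_image] at hz
      obtain ⟨x, hx, rfl⟩ := hz
      exact Finset.mem_range.mpr (hglt x hx)
    · rw [Finset.card_image_of_injOn hinj, hTcard, Finset.card_range]
  have hval : (Finset.range L).val = T.val.map (gapCount S) := by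
    rw [← himg, Finset.image_val_of_injOn hinj]
  have hcoe : (((List.range L).map
      (fun j => L - j + (S.filter (fun s => j < gapCount S s)).card) : List ℕ) : Multiset ℕ)
      = (Finset.range L).val.map (fun j => L - j + (S.filter (fun s => j < gapCount S s)).card) := rfl
  rw [hcoe, hval, Multiset.map_map]
  apply Multiset.map_congr rfl
  intro x hx
  have hxT : x ∈ T := hx
  obtain ⟨hxa0, hxS⟩ := hmemT x hxT
  have hfilt : S.filter (fun s => gapCount S x < gapCount S s) = S.filter (fun s => x < s) := by
    apply Finset.filter_congr
    intro s hs
    constructor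
    · intro hgs
      by_contra hxs
      have hsx : s < x := by
        have : s ≠ x := fun hc => hxS (hc ▸ hs)
        omega
      exact absurd hgs (by have := gapCount_mono S (Nat.le_of_lt hsx); omega)
    · intro hxs
      exact gapCount_lt S hxS hxs
  have htri : (S.filter (fun s => x < s)).card + (S.filter (fun s => s < x)).card = S.card := by
    have h2 := Finset.card_filter_add_card_filter_not (s := S) (p := fun s => x < s)
    have : S.filter (fun s => ¬ x < s) = S.filter (fun s => s < x) := by
      apply Finset.filter_congr
      intro s hs
      have : s ≠ x := fun hc => hxS (hc ▸ hs)
      constructor <;> intro <;> omega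
    rw [this] at h2
    exact h2
  have hclx : (S.filter (fun s => s < x)).card ≤ x := by
    calc (S.filter (fun s => s < x)).card ≤ (Finset.range x).card :=
          Finset.card_le_card (fun s hs => Finset.mem_range.mpr (Finset.mem_filter.mp hs).2)
      _ = x := Finset.card_range x
  have hgx : gapCount S x = x - (S.filter (fun s => s < x)).card := gapCount_eq S x
  have hgxL : gapCount S x < L := hglt x hxT
  simp only [Function.comp]
  rw [hfilt]
  omega

lemma hooks_eq (A : Finset ℕ) :
    hooks (partitionOfBeta A)
      = A.val.bind (fun a => (Finset.range a \ A).val.map (fun x => a - x)) := by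
  induction A using Finset.strongInduction with
  | _ A ih =>
    rcases A.eq_empty_or_nonempty with rfl | h
    · simp [partitionOfBeta, hooks]
    · have hmem := A.max'_mem h
      set m := A.max' h with hm
      set S := A.erase m with hSdef
      have hcard : S.card = A.card - 1 := Finset.card_erase_of_mem hmem
      have hlt : ∀ s ∈ S, s < m := by
        intro s hs
        exact lt_of_le_of_ne (A.le_max' s (Finset.mem_of_mem_erase hs))
          (Finset.ne_of_mem_erase hs)
      rw [partitionOfBeta_cons A h, hooks_cons, ih S (Finset.erase_ssubset hmem)]
      have hrowfun : ∀ j,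
          m - (A.card - 1) - j + ((partitionOfBeta S).filter (fun p => decide (j < p))).length
          = m - S.card - j + (S.filter (fun s => j < gapCount S s)).card := by
        intro j
        rw [filter_partition_length, hcard]
      have hrow : (((List.range (m - (A.card - 1))).map
          (fun j => m - (A.card - 1) - j
            + ((partitionOfBeta S).filter (fun p => decide (j < p))).length) : List ℕ) : Multiset ℕ)
          = (Finset.range m \ S).val.map (fun x => m - x) := by
        rw [← row_lemma m S hlt]
        congr 1
        rw [hcard]
        apply List.map_congr_left
        intro j _
        rw [filter_partition_length]
      rw [hrow]
      have hAval : A.val = m ::ₘ S.val := by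
        conv_lhs => rw [← Finset.insert_erase hmem]
        exact Finset.insert_val_of_notMem (Finset.notMem_erase m A)
      rw [hAval, Multiset.cons_bind]
      congr 1
      · have hset : Finset.range m \ S = Finset.range m \ A := by
          ext x
          simp only [Finset.mem_sdiff, Finset.mem_range, hSdef, Finset.mem_erase]
          constructor
          · rintro ⟨h1, h2⟩
            exact ⟨h1, fun hc => h2 ⟨by omega, hc⟩⟩
          · rintro ⟨h1, h2⟩
            exact ⟨h1, fun hc => h2 hc.2⟩
        rw [hset]
      · apply Multiset.bind_congr
        intro a ha
        have haS : a ∈ S := ha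
        have halt : a < m := hlt a haS
        have hset : Finset.range a \ S = Finset.range a \ A := by
          ext x
          simp only [Finset.mem_sdiff, Finset.mem_range, hSdef, Finset.mem_erase]
          constructor
          · rintro ⟨h1, h2⟩
            exact ⟨h1, fun hc => h2 ⟨by omega, hc⟩⟩
          · rintro ⟨h1, h2⟩
            exact ⟨h1, fun hc => h2 hc.2⟩
        rw [hset]

/-! ### Counting -/

/-- Number of pairs `(a, x) ∈ X × Y` with `a = x + k`. -/
def Nk (k : ℕ) (X Y : Finset ℕ) : ℕ :=
  ∑ a ∈ X, (Y.filter (fun x => a = x + k)).card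

lemma count_hooks (n : ℕ) (A : Finset ℕ) (hA : A ⊆ Finset.Icc 1 n) (k : ℕ) (hk : 1 ≤ k) :
    (hooks (partitionOfBeta A)).count k = Nk k A (Finset.range (n+1) \ A) := by
  rw [hooks_eq, Multiset.count_bind, Nk, Finset.sum_eq_multiset_sum]
  congr 1
  apply Multiset.map_congr rfl
  intro a ha
  have haA : a ∈ A := ha
  have han : a ≤ n := (Finset.mem_Icc.mp (hA haA)).2
  have hset : (Finset.range a \ A).filter (fun x => k = a - x)
      = (Finset.range (n+1) \ A).filter (fun x => a = x + k) := by
    ext x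
    simp only [Finset.mem_filter, Finset.mem_sdiff, Finset.mem_range]
    constructor
    · rintro ⟨⟨h1, h2⟩, h3⟩
      exact ⟨⟨by omega, h2⟩, by omega⟩
    · rintro ⟨⟨h1, h2⟩, h3⟩
      exact ⟨⟨by omega, h2⟩, by omega⟩
  rw [Multiset.count_map, ← Finset.filter_val, ← Finset.card_def, hset]

lemma count_msAdd (M N : Multiset ℕ) (m : ℕ) :
    (msAdd M N).count m = (M.map (fun x => (N.filter (fun y => m = x + y)).card)).sum := by
  rw [msAdd, Multiset.count_bind]
  congr 1
  apply Multiset.map_congr rfl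
  intro x _
  rw [Multiset.count_map]

lemma term1 (n k : ℕ) (X A : Finset ℕ) (hX : X ⊆ Finset.Icc 1 n) :
    (msAdd X.val ((Finset.range (n + 1) \ A).image (fun a => n - a)).val).count (n + k)
      = Nk k X (Finset.range (n+1) \ A) := by
  have hinj : Set.InjOn (fun a => n - a) ((Finset.range (n+1) \ A : Finset ℕ) : Set ℕ) := by
    intro x hx y hy hxy
    have hx' : x < n + 1 := Finset.mem_range.mp (Finset.mem_sdiff.mp (Finset.mem_coe.mp hx)).1
    have hy' : y < n + 1 := Finset.mem_range.mp (Finset.mem_sdiff.mp (Finset.mem_coe.mp hy)).1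
    simp only at hxy
    omega
  rw [count_msAdd, Nk, Finset.sum_eq_multiset_sum]
  congr 1
  apply Multiset.map_congr rfl
  intro x _
  rw [Finset.image_val_of_injOn hinj, Multiset.filter_map, Multiset.card_map]
  simp only [Function.comp]
  rw [← Finset.filter_val, ← Finset.card_def]
  congr 1
  apply Finset.filter_congr
  intro y hy
  have hy' : y ≤ n := by
    have := Finset.mem_range.mp (Finset.mem_sdiff.mp hy).1
    omega
  constructor <;> intro <;> omega

lemma term2 (n k : ℕ) (Y C : Finset ℕ) (hk : 1 ≤ k) (hC : C ⊆ Finset.Icc 1 n) (hsym : NSymm n C) :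
    (msAdd Y.val C.val).count (n + k) = Nk k Y C := by
  have hinj : Set.InjOn (fun a => n - a) (C : Set ℕ) := by
    intro x hx y hy hxy
    have hx' := Finset.mem_Icc.mp (hC (Finset.mem_coe.mp hx))
    have hy' := Finset.mem_Icc.mp (hC (Finset.mem_coe.mp hy))
    simp only at hxy
    omega
  have hmap : C.val.map (fun a => n - a) = C.val := by
    conv_rhs => rw [← (show C.image (fun x => n - x) = C from hsym)]
    rw [Finset.image_val_of_injOn hinj]
  rw [count_msAdd, Nk, Finset.sum_eq_multiset_sum]
  congr 1
  apply Multiset.map_congr rfl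
  intro x _
  conv_lhs => rw [← hmap]
  rw [Multiset.filter_map, Multiset.card_map]
  simp only [Function.comp]
  rw [← Finset.filter_val, ← Finset.card_def]
  congr 1
  apply Finset.filter_congr
  intro y hy
  have hy' := Finset.mem_Icc.mp (hC hy)
  constructor <;> intro <;> omega

lemma term4 (n k : ℕ) (D Y : Finset ℕ) (hk : 1 ≤ k) (hD : D ⊆ Finset.Icc 1 n)
    (hsym : NSymm n D) :
    (msAdd D.val Y.val).count (n + k) = Nk k Y D := by
  have hinj : Set.InjOn (fun a => n - a) (D : Set ℕ) := by
    intro x hx y hy hxy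
    have hx' := Finset.mem_Icc.mp (hD (Finset.mem_coe.mp hx))
    have hy' := Finset.mem_Icc.mp (hD (Finset.mem_coe.mp hy))
    simp only at hxy
    omega
  have hmap : D.val.map (fun a => n - a) = D.val := by
    conv_rhs => rw [← (show D.image (fun x => n - x) = D from hsym)]
    rw [Finset.image_val_of_injOn hinj]
  rw [count_msAdd]
  conv_lhs => rw [← hmap]
  rw [Multiset.map_map, ← Finset.sum_eq_multiset_sum, Nk]
  have hrhs : ∀ y ∈ Y, (D.filter (fun x => y = x + k)).card
      = ∑ d ∈ D, if y = d + k then 1 else 0 := by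
    intro y _
    rw [Finset.card_filter]
  rw [Finset.sum_congr rfl hrhs, Finset.sum_comm]
  apply Finset.sum_congr rfl
  intro d hd
  have hd' := Finset.mem_Icc.mp (hD hd)
  simp only [Function.comp]
  rw [← Finset.filter_val, ← Finset.card_def, Finset.card_filter]
  apply Finset.sum_congr rfl
  intro y _
  have hiff : (n + k = (n - d) + y) ↔ (y = d + k) := by omega
  rw [if_congr hiff rfl rfl]

lemma Nk_expand (k : ℕ) (P X Y : Finset ℕ) (hX : X ⊆ P) (hY : Y ⊆ P) :
    (Nk k X Y : ℤ) = ∑ a ∈ P, ∑ x ∈ P,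
      (if a ∈ X then 1 else 0) * (if x ∈ Y then 1 else 0)
        * (if a = x + k then (1:ℤ) else 0) := by
  rw [Nk]
  rw [← Finset.sum_subset hX (fun a _ ha => by simp [ha])]
  push_cast
  apply Finset.sum_congr rfl
  intro a haX
  rw [if_pos haX]
  rw [← Finset.sum_subset hY (fun x _ hx => by simp [hx])]
  rw [Finset.card_filter]
  push_cast
  apply Finset.sum_congr rfl
  intro x hxY
  rw [if_pos hxY]
  ring

lemma final_identity (n k : ℕ) (A B : Finset ℕ) (hA : A ⊆ Finset.Icc 1 n)
    (hB : B ⊆ Finset.Icc 1 n) :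
    (Nk k A (Finset.range (n+1) \ A) : ℤ) - Nk k B (Finset.range (n+1) \ B)
      = (Nk k (A \ B) (Finset.range (n+1) \ A) : ℤ) - Nk k B (A \ B)
        - Nk k (B \ A) (Finset.range (n+1) \ A) + Nk k B (B \ A) := by
  set P := Finset.range (n+1) with hP
  have hsub : Finset.Icc 1 n ⊆ P := by
    intro x hx
    rw [Finset.mem_Icc] at hx
    rw [hP, Finset.mem_range]
    omega
  have hAP : A ⊆ P := hA.trans hsub
  have hBP : B ⊆ P := hB.trans hsub
  rw [Nk_expand k P A (P \ A) hAP Finset.sdiff_subset,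
    Nk_expand k P B (P \ B) hBP Finset.sdiff_subset,
    Nk_expand k P (A \ B) (P \ A) (Finset.sdiff_subset.trans hAP) Finset.sdiff_subset,
    Nk_expand k P B (A \ B) hBP (Finset.sdiff_subset.trans hAP),
    Nk_expand k P (B \ A) (P \ A) (Finset.sdiff_subset.trans hBP) Finset.sdiff_subset,
    Nk_expand k P B (B \ A) hBP (Finset.sdiff_subset.trans hBP)]
  rw [← Finset.sum_sub_distrib, ← Finset.sum_sub_distrib, ← Finset.sum_sub_distrib,
    ← Finset.sum_add_distrib]
  apply Finset.sum_congr rfl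
  intro a ha
  rw [← Finset.sum_sub_distrib, ← Finset.sum_sub_distrib, ← Finset.sum_sub_distrib,
    ← Finset.sum_add_distrib]
  apply Finset.sum_congr rfl
  intro x hx
  simp only [Finset.mem_sdiff, ha, hx, true_and]
  by_cases h5 : a = x + k
  · simp only [if_pos h5]
    by_cases h1 : a ∈ A <;> by_cases h2 : a ∈ B <;> by_cases h3 : x ∈ A <;>
      by_cases h4 : x ∈ B <;>
      simp [h1, h2, h3, h4] <;> try norm_num
  · simp [h5]


/-- Step 2: the multiplicity identity. With `C = A \ B`, `D = B \ A`, `A' = I_n \ A`,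
and `C`, `D` `n`-symmetric, for all `1 ≤ k ≤ n`:
`H(λ_A)_k - H(λ_B)_k = (C + (n - A'))_{n+k} - (B + C)_{n+k} - (D + (n - A'))_{n+k} + (D + B)_{n+k}`. -/
theorem stmt_9 (n : ℕ) (A B : Finset ℕ) (hA : A ⊆ Finset.Icc 1 n) (hB : B ⊆ Finset.Icc 1 n)
    (hnA : n ∈ A) (hnB : n ∈ B)
    (hC : NSymm n (A \ B)) (hD : NSymm n (B \ A)) :
    ∀ k : ℕ, 1 ≤ k → k ≤ n →
      ((hooks (partitionOfBeta A)).count k : ℤ) - ((hooks (partitionOfBeta B)).count k : ℤ) =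
        ((msAdd (A \ B).val ((Finset.range (n + 1) \ A).image (fun a => n - a)).val).count (n + k) : ℤ)
        - ((msAdd B.val (A \ B).val).count (n + k) : ℤ)
        - ((msAdd (B \ A).val ((Finset.range (n + 1) \ A).image (fun a => n - a)).val).count (n + k) : ℤ)
        + ((msAdd (B \ A).val B.val).count (n + k) : ℤ) := by
  intro k hk1 hkn
  rw [count_hooks n A hA k hk1, count_hooks n B hB k hk1,
    term1 n k (A \ B) A ((Finset.sdiff_subset).trans hA),
    term2 n k B (A \ B) hk1 ((Finset.sdiff_subset).trans hA) hC,
    term1 n k (B \ A) A ((Finset.sdiff_subset).trans hB),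
    term4 n k (B \ A) B hk1 ((Finset.sdiff_subset).trans hB) hD]
  exact final_identity n k A B hA hB
end

section
/- For any n ≥ 0, the partitions λ_n = (n+6, n+3, n+3, 2) and μ_n = (n+5, n+5, n+2, 1, 1) are not conjugate to each other but have the same hook multiset: H(λ_n) = H(μ_n). -/
/-- The interval list `[a, a-1, ..., a-m+1]`. -/
def I (a m : ℕ) : List ℕ := (List.range m).map (fun j => a - j)

lemma map_range_congr {m : ℕ} {f g : ℕ → ℕ} (h : ∀ j < m, f j = g j) :
    (List.range m).map f = (List.range m).map g :=
  List.map_congr_left fun x hx => h x (List.mem_range.mp hx)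

lemma I_split (a m k : ℕ) : I a (m + k) = I a m ++ I (a - m) k := by
  unfold I
  rw [List.range_add, List.map_append, List.map_map]
  congr 1
  apply map_range_congr
  intro j _
  simp only [Function.comp_apply]
  omega

lemma rowL0 (n : ℕ) :
    List.map (fun j => n + 6 - j +
      (List.filter (fun p => decide (j < p)) [n + 3, n + 3, 2]).length) (List.range (n + 6)) =
    I (n + 9) 2 ++ I (n + 6) (n + 1) ++ I 3 3 := by
  rw [show n + 6 = 2 + (n + 1) + 3 by omega, List.range_add, List.range_add,
    List.map_append, List.map_append, List.map_map, List.map_map]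
  congr 1
  congr 1
  · apply map_range_congr; intro j hj
    simp only [List.filter_cons, List.filter_nil, decide_eq_true_eq]
    split_ifs <;> simp <;> omega
  · apply map_range_congr; intro j hj
    simp only [Function.comp_apply, List.filter_cons, List.filter_nil, decide_eq_true_eq]
    split_ifs <;> simp <;> omega
  · apply map_range_congr; intro j hj
    simp only [Function.comp_apply, List.filter_cons, List.filter_nil, decide_eq_true_eq]
    split_ifs <;> simp <;> omega

lemma rowL1 (n : ℕ) :
    List.map (fun j => n + 3 - j +
      (List.filter (fun p => decide (j < p)) [n + 3, 2]).length) (List.range (n + 3)) =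
    I (n + 5) 2 ++ I (n + 2) (n + 1) := by
  rw [show n + 3 = 2 + (n + 1) by omega, List.range_add, List.map_append, List.map_map]
  congr 1
  · apply map_range_congr; intro j hj
    simp only [List.filter_cons, List.filter_nil, decide_eq_true_eq]
    split_ifs <;> simp <;> omega
  · apply map_range_congr; intro j hj
    simp only [Function.comp_apply, List.filter_cons, List.filter_nil, decide_eq_true_eq]
    split_ifs <;> simp <;> omega

lemma rowL2 (n : ℕ) :
    List.map (fun j => n + 3 - j +
      (List.filter (fun p => decide (j < p)) [2]).length) (List.range (n + 3)) =
    I (n + 4) 2 ++ I (n + 1) (n + 1) := by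
  rw [show n + 3 = 2 + (n + 1) by omega, List.range_add, List.map_append, List.map_map]
  congr 1
  · apply map_range_congr; intro j hj
    simp only [List.filter_cons, List.filter_nil, decide_eq_true_eq]
    split_ifs <;> simp <;> omega
  · apply map_range_congr; intro j hj
    simp only [Function.comp_apply, List.filter_cons, List.filter_nil, decide_eq_true_eq]
    split_ifs <;> simp <;> omega

lemma rowL3 :
    List.map (fun j => 2 - j +
      (List.filter (fun p => decide (j < p)) ([] : List ℕ)).length) (List.range 2) = I 2 2 := by
  apply map_range_congr; intro j hj
  simp

lemma rowM0 (n : ℕ) :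
    List.map (fun j => n + 5 - j +
      (List.filter (fun p => decide (j < p)) [n + 5, n + 2, 1, 1]).length) (List.range (n + 5)) =
    I (n + 9) 1 ++ I (n + 6) (n + 1) ++ I 4 3 := by
  rw [show n + 5 = 1 + (n + 1) + 3 by omega, List.range_add, List.range_add,
    List.map_append, List.map_append, List.map_map, List.map_map]
  congr 1
  congr 1
  · apply map_range_congr; intro j hj
    simp only [List.filter_cons, List.filter_nil, decide_eq_true_eq]
    split_ifs <;> simp <;> omega
  · apply map_range_congr; intro j hj
    simp only [Function.comp_apply, List.filter_cons, List.filter_nil, decide_eq_true_eq]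
    split_ifs <;> simp <;> omega
  · apply map_range_congr; intro j hj
    simp only [Function.comp_apply, List.filter_cons, List.filter_nil, decide_eq_true_eq]
    split_ifs <;> simp <;> omega

lemma rowM1 (n : ℕ) :
    List.map (fun j => n + 5 - j +
      (List.filter (fun p => decide (j < p)) [n + 2, 1, 1]).length) (List.range (n + 5)) =
    I (n + 8) 1 ++ I (n + 5) (n + 1) ++ I 3 3 := by
  rw [show n + 5 = 1 + (n + 1) + 3 by omega, List.range_add, List.range_add,
    List.map_append, List.map_append, List.map_map, List.map_map]
  congr 1
  congr 1
  · apply map_range_congr; intro j hj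
    simp only [List.filter_cons, List.filter_nil, decide_eq_true_eq]
    split_ifs <;> simp <;> omega
  · apply map_range_congr; intro j hj
    simp only [Function.comp_apply, List.filter_cons, List.filter_nil, decide_eq_true_eq]
    split_ifs <;> simp <;> omega
  · apply map_range_congr; intro j hj
    simp only [Function.comp_apply, List.filter_cons, List.filter_nil, decide_eq_true_eq]
    split_ifs <;> simp <;> omega

lemma rowM2 (n : ℕ) :
    List.map (fun j => n + 2 - j +
      (List.filter (fun p => decide (j < p)) [1, 1]).length) (List.range (n + 2)) =
    I (n + 4) 1 ++ I (n + 1) (n + 1) := by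
  rw [show n + 2 = 1 + (n + 1) by omega, List.range_add, List.map_append, List.map_map]
  congr 1
  · apply map_range_congr; intro j hj
    simp only [List.filter_cons, List.filter_nil, decide_eq_true_eq]
    split_ifs <;> simp <;> omega
  · apply map_range_congr; intro j hj
    simp only [Function.comp_apply, List.filter_cons, List.filter_nil, decide_eq_true_eq]
    split_ifs <;> simp <;> omega

lemma rowM3 :
    List.map (fun j => 1 - j +
      (List.filter (fun p => decide (j < p)) [1]).length) (List.range 1) = I 2 1 := by
  apply map_range_congr; intro j hj
  simp only [List.filter_cons, List.filter_nil, decide_eq_true_eq]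
  split_ifs <;> simp <;> omega

lemma rowM4 :
    List.map (fun j => 1 - j +
      (List.filter (fun p => decide (j < p)) ([] : List ℕ)).length) (List.range 1) = I 1 1 := by
  apply map_range_congr; intro j hj
  simp

/-- Herman–Chung: for every `n`, the partitions `(n+6, n+3, n+3, 2)` and
`(n+5, n+5, n+2, 1, 1)` are not conjugate but have the same hook multiset. -/
theorem stmt_10 (n : ℕ) :
    conjugatePart [n + 6, n + 3, n + 3, 2] ≠ [n + 5, n + 5, n + 2, 1, 1] ∧
    hooks [n + 6, n + 3, n + 3, 2] = hooks [n + 5, n + 5, n + 2, 1, 1] := by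
  constructor
  · intro h
    have hl := congrArg List.length h
    simp [conjugatePart] at hl
  · simp only [hooks, List.length_cons, List.length_nil,
      show List.range (0+1+1+1+1) = [0,1,2,3] from rfl,
      show List.range (0+1+1+1+1+1) = [0,1,2,3,4] from rfl,
      List.flatMap_cons, List.flatMap_nil,
      List.getD_cons_zero, List.getD_cons_succ, List.drop_succ_cons, List.drop_zero,
      List.append_nil]
    rw [rowL0, rowL1, rowL2, rowL3, rowM0, rowM1, rowM2, rowM3, rowM4]
    -- key splits
    have e1 : I (n + 9) 2 = I (n + 9) 1 ++ I (n + 8) 1 := by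
      have := I_split (n + 9) 1 1; simpa [show n + 9 - 1 = n + 8 by omega] using this
    have e2 : I (n + 4) 2 = I (n + 4) 1 ++ I (n + 3) 1 := by
      have := I_split (n + 4) 1 1; simpa [show n + 4 - 1 = n + 3 by omega] using this
    have e3 : I 2 2 = I 2 1 ++ I 1 1 := by
      have := I_split 2 1 1; simpa using this
    have e4 : I (n + 5) 2 ++ (I (n + 3) 1 ++ I (n + 2) (n + 1)) = I (n + 5) (n + 4) := by
      have h1 := I_split (n + 5) 2 (n + 2)
      rw [show 2 + (n + 2) = n + 4 by omega, show n + 5 - 2 = n + 3 by omega] at h1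
      have h2 := I_split (n + 3) 1 (n + 1)
      rw [show 1 + (n + 1) = n + 2 by omega, show n + 3 - 1 = n + 2 by omega] at h2
      rw [h1, h2]
    have e5 : I (n + 5) (n + 4) = I (n + 5) (n + 1) ++ I 4 3 := by
      have h1 := I_split (n + 5) (n + 1) 3
      rw [show n + 1 + 3 = n + 4 by omega, show n + 5 - (n + 1) = 4 by omega] at h1
      exact h1
    have key : (↑(I (n + 5) 2) : Multiset ℕ) + ↑(I (n + 3) 1) + ↑(I (n + 2) (n + 1))
        = ↑(I (n + 5) (n + 1)) + ↑(I 4 3) := by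
      have h : ((I (n + 5) 2 ++ (I (n + 3) 1 ++ I (n + 2) (n + 1)) : List ℕ) : Multiset ℕ)
          = ↑(I (n + 5) (n + 1) ++ I 4 3) := congrArg _ (by rw [e4, e5])
      simp only [← Multiset.coe_add] at h
      rw [← h]; abel
    rw [e1, e2, e3]
    simp only [← Multiset.coe_add]
    trans ((↑(I (n+9) 1) + ↑(I (n+8) 1) + ↑(I (n+6) (n+1)) + ↑(I 3 3) + ↑(I (n+4) 1)
      + ↑(I (n+1) (n+1)) + ↑(I 2 1) + ↑(I 1 1)
      + (↑(I (n+5) 2) + ↑(I (n+3) 1) + ↑(I (n+2) (n+1)))) : Multiset ℕ)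
    · abel
    rw [key]
    abel
end
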